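/- arXiv:1603.07616 — 3 statements merged into one kernel-verified Lean document; each statement's English description precedes it below -/
import Mathlib

section
/- Let Γ ↷ (X,μ) be a probability measure preserving action of a countable group Γ, and let w₁, w₂ : Γ × X → Δ be cocycles into a countable group Δ. Let μ = ∫_Y ν dρ(ν) be an integral decomposition of μ, where ρ is a Borel probability measure on the space Y of Γ-invariant Borel probability measures on X. Then d_μ(w₁,w₂) ≤ ∫_Y d_ν(w₁,w₂) dρ(ν) ≤ 4·d_μ(w₁,w₂). -/
/- STATEMENT 5: The uniform distance between two cocycles is comparable (within a
factor of 4) with its average over an integral decomposition of the measure into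
invariant measures (Lemma 2.2). -/

open MeasureTheory Filter Set Topology ENNReal

set_option linter.unusedSectionVars false
set_option maxHeartbeats 1000000

namespace CocycleAux


variable {X : Type*} [MeasurableSpace X] {Δ : Type*} [MeasurableSpace Δ]

/-- fiberwise square sum -/
noncomputable def phi2 (F : X × Δ → ℝ) : X → ℝ≥0∞ := fun x => ∑' d : Δ, (‖F (x, d)‖₊ : ℝ≥0∞) ^ 2

/-- squared L²-norm of `F` w.r.t. `ν ⊗ count`, in iterated form -/
noncomputable def nsq (ν : Measure X) (F : X × Δ → ℝ) : ℝ≥0∞ := ∫⁻ x, phi2 F x ∂ν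

/-- L²-norm -/
noncomputable def nr (ν : Measure X) (F : X × Δ → ℝ) : ℝ≥0∞ := nsq ν F ^ (2⁻¹ : ℝ)

/-- substitute for the product measure `ν ⊗ count` (defined without s-finiteness) -/
noncomputable def mZ (ν : Measure X) : Measure (X × Δ) :=
  Measure.sum fun d : Δ => ν.map (fun x => (x, d))

open Classical in
/-- indicator of the graph of `φ` -/
noncomputable def gr (φ : X → Δ) : X × Δ → ℝ := fun z => if z.2 = φ z.1 then 1 else 0

lemma en_sq (r : ℝ) : (‖r‖₊ : ℝ≥0∞) ^ 2 = ENNReal.ofReal (r ^ 2) := by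
  rw [pow_two, ← ENNReal.coe_mul, ← nnnorm_mul, ← enorm_eq_nnnorm, Real.enorm_eq_ofReal_abs, abs_mul_self,
    ← pow_two]

lemma phi2_meas [Countable Δ] {F : X × Δ → ℝ} (hF : Measurable F) : Measurable (phi2 F) := by
  apply Measurable.ennreal_tsum (fun d => ?_)
  exact ((hF.comp measurable_prodMk_right).nnnorm.coe_nnreal_ennreal).pow_const 2

lemma lintegral_mZ [Countable Δ] {ν : Measure X} {G : X × Δ → ℝ≥0∞} (hG : Measurable G) :
    ∫⁻ z, G z ∂(mZ ν) = ∫⁻ x, ∑' d : Δ, G (x, d) ∂ν := by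
  rw [mZ, lintegral_sum_measure]
  have h1 : ∀ d : Δ, ∫⁻ z, G z ∂(ν.map fun x => (x, d)) = ∫⁻ x, G (x, d) ∂ν := fun d =>
    lintegral_map hG measurable_prodMk_right
  simp_rw [h1]
  exact (lintegral_tsum fun d => (hG.comp measurable_prodMk_right).aemeasurable).symm

lemma nsq_eq_mZ [Countable Δ] {ν : Measure X} {F : X × Δ → ℝ} (hF : Measurable F) :
    nsq ν F = ∫⁻ z, (‖F z‖₊ : ℝ≥0∞) ^ 2 ∂(mZ ν) := by
  rw [lintegral_mZ (hF.nnnorm.coe_nnreal_ennreal.pow_const 2)]; rfl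

lemma nr_add_le [Countable Δ] {ν : Measure X} {F G : X × Δ → ℝ}
    (hF : Measurable F) (hG : Measurable G) :
    nr ν (fun z => F z + G z) ≤ nr ν F + nr ν G := by
  unfold nr
  rw [nsq_eq_mZ (F := fun z => F z + G z) (hF.add hG), nsq_eq_mZ hF, nsq_eq_mZ hG]
  have key := ENNReal.lintegral_Lp_add_le (μ := mZ ν) (p := 2)
    (f := fun z => (‖F z‖₊ : ℝ≥0∞)) (g := fun z => (‖G z‖₊ : ℝ≥0∞))
    hF.nnnorm.coe_nnreal_ennreal.aemeasurable hG.nnnorm.coe_nnreal_ennreal.aemeasurable one_le_two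
  have e1 : ∀ x : ℝ≥0∞, x ^ (2 : ℝ) = x ^ (2 : ℕ) := fun x => by
    rw [← ENNReal.rpow_natCast x 2]; norm_num
  simp_rw [e1, one_div] at key
  refine le_trans ?_ key
  apply ENNReal.rpow_le_rpow ?_ (by norm_num)
  refine lintegral_mono fun z => ?_
  have : (‖F z + G z‖₊ : ℝ≥0∞) ≤ (‖F z‖₊ : ℝ≥0∞) + ‖G z‖₊ := by
    exact_mod_cast nnnorm_add_le (F z) (G z)
  exact pow_le_pow_left' this 2

lemma nr_smul [Countable Δ] {ν : Measure X} {F : X × Δ → ℝ} (hF : Measurable F) {c : ℝ}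
    (hc : 0 ≤ c) :
    nr ν (fun z => c * F z) = ENNReal.ofReal c * nr ν F := by
  have hpt : ∀ x, phi2 (fun z => c * F z) x = ENNReal.ofReal c ^ 2 * phi2 F x := by
    intro x
    rw [phi2, phi2, ← ENNReal.tsum_mul_left]
    congr 1; ext d
    rw [en_sq, en_sq, mul_pow, ENNReal.ofReal_mul (by positivity), ENNReal.ofReal_pow hc]
  unfold nr nsq
  simp_rw [hpt]
  rw [lintegral_const_mul _ (phi2_meas hF)]
  rw [ENNReal.mul_rpow_of_nonneg _ _ (by norm_num)]
  congr 1
  rw [← ENNReal.rpow_natCast (ENNReal.ofReal c) 2, ← ENNReal.rpow_mul]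
  norm_num

lemma nsq_neg {ν : Measure X} {F G : X × Δ → ℝ} :
    nsq ν (fun z => F z - G z) = nsq ν (fun z => G z - F z) := by
  unfold nsq phi2
  congr 1; ext x; congr 1; ext d
  rw [← nnnorm_neg (F (x,d) - G (x,d)), neg_sub]

lemma nr_sq {ν : Measure X} (F : X × Δ → ℝ) : nr ν F ^ 2 = nsq ν F := by
  rw [nr, ← ENNReal.rpow_natCast (nsq ν F ^ (2⁻¹:ℝ)) 2, ← ENNReal.rpow_mul]
  norm_num

lemma nsq_congr_ae {ν : Measure X} {F G : X × Δ → ℝ}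
    (h : ∀ᵐ x ∂ν, ∀ d : Δ, F (x, d) = G (x, d)) : nsq ν F = nsq ν G := by
  refine lintegral_congr_ae (h.mono fun x hx => ?_)
  unfold phi2; congr 1; ext d; rw [hx d]

/-- parallelogram -/
lemma nsq_parallelogram [Countable Δ] {ν : Measure X} {F G : X × Δ → ℝ}
    (hF : Measurable F) (hG : Measurable G) :
    nsq ν (fun z => F z - G z) + nsq ν (fun z => F z + G z) = 2 * nsq ν F + 2 * nsq ν G := by
  have hpt : ∀ x, phi2 (fun z => F z - G z) x + phi2 (fun z => F z + G z) x
      = 2 * phi2 F x + 2 * phi2 G x := by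
    intro x
    rw [phi2, phi2, phi2, phi2, ← ENNReal.tsum_add, ← ENNReal.tsum_mul_left,
      ← ENNReal.tsum_mul_left, ← ENNReal.tsum_add]
    congr 1; ext d
    rw [en_sq, en_sq, en_sq, en_sq]
    rw [show (2:ℝ≥0∞) = ENNReal.ofReal 2 by simp]
    rw [← ENNReal.ofReal_mul (by norm_num), ← ENNReal.ofReal_mul (by norm_num),
      ← ENNReal.ofReal_add (by positivity) (by positivity),
      ← ENNReal.ofReal_add (by positivity) (by positivity)]
    congr 1; ring
  unfold nsq
  rw [← lintegral_add_left (phi2_meas (F := fun z => F z - G z) (hF.sub hG))]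
  simp_rw [hpt]
  rw [lintegral_add_left ((phi2_meas hF).const_mul 2),
    lintegral_const_mul _ (phi2_meas hF), lintegral_const_mul _ (phi2_meas hG)]

lemma nsq_gr_sub [Countable Δ] {ν : Measure X} {φ χ : X → Δ}
    (hE : MeasurableSet {x | φ x ≠ χ x}) :
    nsq ν (fun z => gr φ z - gr χ z) = 2 * ν {x | φ x ≠ χ x} := by
  classical
  have hpt : ∀ x, phi2 (fun z => gr φ z - gr χ z) x
      = ({x | φ x ≠ χ x} : Set X).indicator (fun _ => (2:ℝ≥0∞)) x := by
    intro x
    by_cases hx : φ x = χ x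
    · have : ∀ d : Δ, gr φ (x, d) - gr χ (x, d) = 0 := by
        intro d; simp only [gr, hx]; ring
      simp only [phi2, this]
      simp [Set.indicator_of_notMem, hx]
    · have hterm : ∀ d : Δ, (‖gr φ (x,d) - gr χ (x,d)‖₊ : ℝ≥0∞) ^ 2
          = (if d = φ x then (1:ℝ≥0∞) else 0) + (if d = χ x then 1 else 0) := by
        intro d
        simp only [gr]
        by_cases h1 : d = φ x
        · have h2 : ¬ d = χ x := fun h => hx (by rw [← h1, h])
          have hx2 : ¬ χ x = φ x := fun h => hx h.symm
          simp [h1, h2, if_neg hx, if_neg hx2]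
        · by_cases h2 : d = χ x
          · have hx2 : ¬ χ x = φ x := fun h => hx h.symm
            simp [h1, h2, if_neg hx2]
          · simp [h1, h2]
      simp only [phi2, hterm]
      have hmem : x ∈ {x | φ x ≠ χ x} := hx
      rw [ENNReal.tsum_add, tsum_ite_eq, tsum_ite_eq, Set.indicator_of_mem hmem]
      norm_num
  unfold nsq
  simp_rw [hpt]
  rw [lintegral_indicator_const hE]

lemma nsq_gr [Countable Δ] {ν : Measure X} (φ : X → Δ) : nsq ν (gr φ) = ν univ := by
  classical
  have hpt : ∀ x, phi2 (gr φ) x = 1 := by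
    intro x
    have hterm : ∀ d : Δ, (‖gr φ (x,d)‖₊ : ℝ≥0∞) ^ 2 = (if d = φ x then (1:ℝ≥0∞) else 0) := by
      intro d
      simp only [gr]
      by_cases h1 : d = φ x <;> simp [h1]
    simp only [phi2, hterm]
    rw [tsum_ite_eq]
  unfold nsq
  simp_rw [hpt]
  exact lintegral_one



lemma nr_zero {ν : Measure X} : nr ν (fun _ : X × Δ => (0:ℝ)) = 0 := by
  have h0 : nsq ν (fun _ : X × Δ => (0:ℝ)) = 0 := by
    unfold nsq phi2; simp
  rw [nr, h0, ENNReal.zero_rpow_of_pos (by norm_num)]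

lemma measurableSet_graph [Countable Δ] [MeasurableSingletonClass Δ] {φ : X → Δ}
    (hφ : Measurable φ) : MeasurableSet {z : X × Δ | z.2 = φ z.1} := by
  have : {z : X × Δ | z.2 = φ z.1} = ⋃ d : Δ, (φ ⁻¹' {d}) ×ˢ ({d} : Set Δ) := by
    ext ⟨x, d⟩
    simp only [Set.mem_setOf_eq, Set.mem_iUnion, Set.mem_prod, Set.mem_preimage,
      Set.mem_singleton_iff]
    constructor
    · intro h; exact ⟨d, h.symm, rfl⟩
    · rintro ⟨d', h1, rfl⟩; exact h1.symm
  rw [this]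
  exact MeasurableSet.iUnion fun d =>
    (hφ (measurableSet_singleton d)).prod (measurableSet_singleton d)

lemma gr_meas [Countable Δ] [MeasurableSingletonClass Δ] {φ : X → Δ} (hφ : Measurable φ) :
    Measurable (gr φ) := by
  classical
  unfold gr
  exact Measurable.ite (measurableSet_graph hφ) measurable_const measurable_const

section Cocycle

variable [Group Δ] {Γ : Type*} [Group Γ] [MulAction Γ X]

/-- skew product transformation comparing two cocycles -/
def TT (w₁ w₂ : Γ → X → Δ) (h : Γ) : X × Δ → X × Δ :=
  fun z => (h • z.1, w₁ h z.1 * z.2 * (w₂ h z.1)⁻¹)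

/-- the coboundary-comparison map -/
def psi (w₁ w₂ : Γ → X → Δ) (g : Γ) (x : X) : Δ := (w₁ g x)⁻¹ * w₂ g x

lemma phi2_comp_TT (w₁ w₂ : Γ → X → Δ) (h : Γ) (F : X × Δ → ℝ) (x : X) :
    phi2 (F ∘ TT w₁ w₂ h) x = phi2 F (h • x) := by
  unfold phi2
  rw [← Equiv.tsum_eq ((Equiv.mulLeft (w₁ h x)).trans (Equiv.mulRight (w₂ h x)⁻¹))
    (fun d => (‖F (h • x, d)‖₊ : ℝ≥0∞) ^ 2)]
  congr 1

lemma nsq_comp_TT [Countable Δ] {w₁ w₂ : Γ → X → Δ} {h : Γ} {F : X × Δ → ℝ}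
    (hF : Measurable F) {ν : Measure X}
    (hinv : MeasurePreserving (fun x : X => h • x) ν ν) :
    nsq ν (F ∘ TT w₁ w₂ h) = nsq ν F := by
  unfold nsq
  simp_rw [phi2_comp_TT]
  exact hinv.lintegral_comp (phi2_meas hF)

lemma grp_rearrange (a b c d : Δ) : (a * d * b⁻¹ = c) ↔ (d = a⁻¹ * c * b) := by
  constructor
  · intro H; rw [← H]; group
  · intro H; rw [H]; group

lemma gr_psi_comp_TT {w₁ w₂ : Γ → X → Δ} {h g : Γ} {x : X}
    (hx : psi w₁ w₂ (g * h) x = (w₁ h x)⁻¹ * psi w₁ w₂ g (h • x) * w₂ h x) (d : Δ) :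
    (gr (psi w₁ w₂ g) ∘ TT w₁ w₂ h) (x, d) = gr (psi w₁ w₂ (g * h)) (x, d) := by
  classical
  simp only [Function.comp, TT, gr]
  by_cases hd : d = psi w₁ w₂ (g * h) x
  · rw [if_pos hd]; refine if_pos ?_
    rw [grp_rearrange, ← hx]
    exact hd
  · rw [if_neg hd]; refine if_neg ?_
    intro hcon
    rw [grp_rearrange, ← hx] at hcon
    exact hd hcon

end Cocycle

section Lists

variable {Γ : Type*}

/-- uniform average of the vectors `u g`, `g` in a list -/
noncomputable def vv (u : Γ → X × Δ → ℝ) (l : List Γ) : X × Δ → ℝ :=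
  fun z => (l.map fun g => u g z).sum / l.length

lemma vv_nil (u : Γ → X × Δ → ℝ) : vv u [] = fun _ => 0 := by
  funext z; simp [vv]

lemma vv_singleton (u : Γ → X × Δ → ℝ) (g : Γ) : vv u [g] = u g := by
  funext z; simp [vv]

lemma meas_list_sum [Countable Δ] {u : Γ → X × Δ → ℝ} (hu : ∀ g, Measurable (u g))
    (l : List Γ) : Measurable fun z => (l.map fun g => u g z).sum := by
  induction l with
  | nil => simpa using measurable_const
  | cons a t ih => simpa using (show Measurable fun z => u a z + (t.map fun g => u g z).sum from (hu a).add ih)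

lemma meas_vv [Countable Δ] {u : Γ → X × Δ → ℝ} (hu : ∀ g, Measurable (u g)) (l : List Γ) :
    Measurable (vv u l) := (meas_list_sum hu l).div_const _

lemma nr_list_sum_le [Countable Δ] {ν : Measure X} {F : Γ → X × Δ → ℝ} (l : List Γ)
    (hF : ∀ g, Measurable (F g)) :
    nr ν (fun z => (l.map fun g => F g z).sum) ≤ (l.map fun g => nr ν (F g)).sum := by
  induction l with
  | nil => simpa using le_of_eq nr_zero
  | cons a t ih =>
      simp only [List.map_cons, List.sum_cons]
      exact le_trans (nr_add_le (hF a) (meas_list_sum hF t)) (add_le_add_right ih _)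

lemma list_sum_map_sub (l : List Γ) (f h : Γ → ℝ) :
    (l.map fun g => f g - h g).sum = (l.map f).sum - (l.map h).sum := by
  induction l with
  | nil => simp
  | cons a t ih => simp [ih]; ring

end Lists

/-- quantitative liminf helper -/
lemma le_four_mul_liminf {C : ℝ≥0∞} (hC : C ≠ ⊤) {b : ℕ → ℝ≥0∞}
    (h : ∀ ε : ℝ≥0∞, 0 < ε → ε < ⊤ → ∀ᶠ j in Filter.atTop, C ≤ 4 * b j + ε) :
    C ≤ 4 * Filter.liminf b Filter.atTop := by
  by_contra hlt
  push_neg at hlt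
  have h4 : Filter.liminf b Filter.atTop < C / 4 := by
    rw [ENNReal.lt_div_iff_mul_lt (by norm_num) (by norm_num)]
    rwa [mul_comm]
  obtain ⟨m, hm1, hm2⟩ := exists_between h4
  have hfreq : ∃ᶠ j in Filter.atTop, b j < m := frequently_lt_of_liminf_lt (by isBoundedDefault) hm1
  have h4m : 4 * m < C :=
    lt_of_lt_of_le ((ENNReal.mul_lt_mul_iff_right (by norm_num) (by norm_num)).mpr hm2)
      ENNReal.mul_div_le
  have hεpos : 0 < C - 4 * m := tsub_pos_of_lt h4m
  have hεtop : C - 4 * m < ⊤ := lt_of_le_of_lt tsub_le_self hC.lt_top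
  have hev := h _ hεpos hεtop
  obtain ⟨j, hj1, hj2⟩ := (hfreq.and_eventually hev).exists
  have : C < C := by
    calc C ≤ 4 * b j + (C - 4 * m) := hj2
    _ < 4 * m + (C - 4 * m) := by
        refine ENNReal.add_lt_add_right (by exact (lt_of_le_of_lt tsub_le_self hC.lt_top).ne) ?_
        exact (ENNReal.mul_lt_mul_iff_right (by norm_num) (by norm_num)).mpr hj1
    _ = C := add_tsub_cancel_of_le h4m.le
  exact lt_irrefl _ this


end CocycleAux

open CocycleAux

/-- A measurable cocycle for a nonsingular action, with values in a (countable) group. -/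
def IsCocycleFor {I X Δ : Type*} [MeasurableSpace X] [Monoid I] [Mul Δ] (μ : Measure X)
    (act : I → X → X) (w : I → X → Δ) : Prop :=
  (∀ g (d : Δ), MeasurableSet {x | w g x = d}) ∧
  ∀ g₁ g₂ : I, ∀ᵐ x ∂μ, w (g₁ * g₂) x = w g₁ (act g₂ x) * w g₂ x

/-- The uniform distance `d_μ(w₁,w₂) = sup_g μ {x | w₁(g,x) ≠ w₂(g,x)}` between two
cocycles. -/
noncomputable def cocycleDist {I X Δ : Type*} [MeasurableSpace X] (μ : Measure X)
    (w₁ w₂ : I → X → Δ) : ℝ≥0∞ :=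
  ⨆ g : I, μ {x | w₁ g x ≠ w₂ g x}

theorem cocycleDist_average
    {X : Type*} [MeasurableSpace X] {Γ : Type*} [Group Γ] [Countable Γ]
    [MulAction Γ X]
    -- Γ ↷ (X, μ) is a probability measure preserving action
    (μ : Measure X) [IsProbabilityMeasure μ]
    (hmeas : ∀ g : Γ, Measurable (fun x : X => g • x))
    (hpmp : ∀ g : Γ, MeasurePreserving (fun x : X => g • x) μ μ)
    -- w₁, w₂ : cocycles into a countable group Δ
    {Δ : Type*} [Group Δ] [Countable Δ]
    (w₁ w₂ : Γ → X → Δ)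
    (hw₁ : IsCocycleFor μ (fun (g : Γ) (x : X) => g • x) w₁)
    (hw₂ : IsCocycleFor μ (fun (g : Γ) (x : X) => g • x) w₂)
    -- μ = ∫_Y ν dρ(ν) is an integral decomposition of μ, where ρ is a Borel probability
    -- measure on the space Y of Γ-invariant Borel probability measures on X
    (ρ : Measure (Measure X)) [IsProbabilityMeasure ρ]
    (hρsupp : ∀ᵐ ν ∂ρ, IsProbabilityMeasure ν ∧
      ∀ g : Γ, Measure.map (fun x : X => g • x) ν = ν)
    (hdecomp : ∀ s : Set X, MeasurableSet s → μ s = ∫⁻ ν, ν s ∂ρ) :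
    cocycleDist μ w₁ w₂ ≤ (∫⁻ ν, cocycleDist ν w₁ w₂ ∂ρ) ∧
      (∫⁻ ν, cocycleDist ν w₁ w₂ ∂ρ) ≤ 4 * cocycleDist μ w₁ w₂ := by
  classical
  letI : MeasurableSpace Δ := ⊤
  haveI : MeasurableSingletonClass Δ := ⟨fun _ => trivial⟩
  -- measurability of the difference sets
  have hA : ∀ g : Γ, MeasurableSet {x | w₁ g x ≠ w₂ g x} := by
    intro g
    have h1 : {x | w₁ g x ≠ w₂ g x} = (⋃ d : Δ, {x | w₁ g x = d} ∩ {x | w₂ g x = d})ᶜ := by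
      ext x
      simp only [mem_setOf_eq, mem_compl_iff, mem_iUnion, mem_inter_iff, not_exists]
      constructor
      · rintro h d ⟨h1, h2⟩; exact h (h1.trans h2.symm)
      · intro h heq; exact h (w₂ g x) ⟨heq, rfl⟩
    rw [h1]
    exact (MeasurableSet.iUnion fun d => (hw₁.1 g d).inter (hw₂.1 g d)).compl
  -- first inequality
  have first : cocycleDist μ w₁ w₂ ≤ ∫⁻ ν, cocycleDist ν w₁ w₂ ∂ρ := by
    refine iSup_le fun g => ?_
    rw [hdecomp _ (hA g)]
    exact lintegral_mono fun ν => le_iSup (fun g' => ν {x | w₁ g' x ≠ w₂ g' x}) g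
  refine ⟨first, ?_⟩
  -- abbreviations
  set δ := cocycleDist μ w₁ w₂ with hδdef
  -- measurability of ψ
  have hΨm : ∀ g : Γ, Measurable (psi w₁ w₂ g) := by
    intro g
    apply measurable_to_countable'
    intro d
    have h1 : (psi w₁ w₂ g) ⁻¹' {d} = ⋃ a : Δ, {x | w₁ g x = a} ∩ {x | w₂ g x = a * d} := by
      ext x
      simp only [mem_preimage, mem_singleton_iff, mem_iUnion, mem_inter_iff, mem_setOf_eq, psi]
      constructor
      · intro h; exact ⟨w₁ g x, rfl, by rw [← h]; group⟩
      · rintro ⟨a, h1, h2⟩; rw [h1, h2]; group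
    rw [h1]
    exact MeasurableSet.iUnion fun a => (hw₁.1 g a).inter (hw₂.1 g (a * d))
  -- the unit vectors and averaged vectors
  set u : Γ → X × Δ → ℝ := fun g => gr (psi w₁ w₂ g) with hudef
  have hum : ∀ g : Γ, Measurable (u g) := fun g => gr_meas (hΨm g)
  set V : List Γ → X × Δ → ℝ := vv u with hVdef
  have hVm : ∀ l : List Γ, Measurable (V l) := fun l => meas_vv hum l
  -- {ψ g ≠ 1} is the difference set
  have hAset : ∀ (g : Γ) (x : X), (psi w₁ w₂ g x ≠ 1) ↔ (w₁ g x ≠ w₂ g x) := by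
    intro g x
    rw [not_iff_not]
    exact inv_mul_eq_one
  have hNEmeas : ∀ g : Γ, MeasurableSet {x | psi w₁ w₂ g x ≠ psi w₁ w₂ 1 x} := by
    intro g
    have h1 : {x | psi w₁ w₂ g x ≠ psi w₁ w₂ 1 x}
        = (⋃ d : Δ, (psi w₁ w₂ g ⁻¹' {d}) ∩ (psi w₁ w₂ 1 ⁻¹' {d}))ᶜ := by
      ext x
      simp only [mem_setOf_eq, mem_compl_iff, mem_iUnion, mem_inter_iff, mem_preimage,
        mem_singleton_iff]
      constructor
      · rintro h ⟨d, h1, h2⟩; exact h (h1.trans h2.symm)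
      · intro h heq; exact h ⟨_, heq, rfl⟩
    rw [h1]
    exact (MeasurableSet.iUnion fun d =>
      ((hΨm g) (measurableSet_singleton d)).inter ((hΨm 1) (measurableSet_singleton d))).compl
  -- the basic norm computation
  have hnsq_ug : ∀ ν : Measure X, (∀ᵐ x ∂ν, psi w₁ w₂ 1 x = 1) → ∀ g : Γ,
      nsq ν (fun z => u g z - u 1 z) = 2 * ν {x | w₁ g x ≠ w₂ g x} := by
    intro ν h1 g
    rw [hudef]
    rw [nsq_gr_sub (hNEmeas g)]
    congr 1
    apply measure_congr
    rw [Filter.eventuallyEq_set]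
    filter_upwards [h1] with x hx
    simp only [mem_setOf_eq, hx]
    exact hAset g x
  -- norm of a single vector
  have hnru : ∀ ν : Measure X, IsProbabilityMeasure ν → ∀ g : Γ, nr ν (u g) = 1 := by
    intro ν hν g
    haveI := hν
    rw [hudef, nr, nsq_gr, measure_univ, ENNReal.one_rpow]
  -- norm bound for averaged vectors
  have hVle1 : ∀ ν : Measure X, IsProbabilityMeasure ν → ∀ l : List Γ, nr ν (V l) ≤ 1 := by
    intro ν hν l
    rcases eq_or_ne l [] with rfl | hl
    · rw [hVdef, vv_nil]; rw [nr_zero]; exact zero_le_one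
    · have hn : (0:ℝ) < l.length := by exact_mod_cast List.length_pos_iff.mpr hl
      have hsplit : V l = fun z => ((l.length:ℝ))⁻¹ * (l.map fun g => u g z).sum := by
        funext z; rw [hVdef]; simp only [vv]; rw [div_eq_inv_mul]
      rw [hsplit, nr_smul (meas_list_sum hum l) (by positivity)]
      calc ENNReal.ofReal (l.length:ℝ)⁻¹ * nr ν (fun z => (l.map fun g => u g z).sum)
          ≤ ENNReal.ofReal (l.length:ℝ)⁻¹ * (l.map fun g => nr ν (u g)).sum :=
            mul_le_mul_right (nr_list_sum_le l hum) _
        _ ≤ ENNReal.ofReal (l.length:ℝ)⁻¹ * (l.map fun g => nr ν (u g)).length • (1:ℝ≥0∞) := by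
            refine mul_le_mul_right (List.sum_le_card_nsmul _ _ ?_) _
            intro x hx
            obtain ⟨g, _, rfl⟩ := List.mem_map.mp hx
            exact le_of_eq (hnru ν hν g)
        _ ≤ 1 := by
            rw [List.length_map, nsmul_eq_mul, mul_one]
            rw [ENNReal.ofReal_inv_of_pos hn, ENNReal.ofReal_natCast]
            have hne : (l.length : ℝ≥0∞) ≠ 0 := by
              exact_mod_cast fun h => hl (List.length_eq_zero_iff.mp h)
            rw [ENNReal.inv_mul_cancel hne (ENNReal.natCast_ne_top _)]
  -- a.e. triviality of the cocycles at the identity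
  have hD1μ : ∀ᵐ x ∂μ, w₁ 1 x = 1 := by
    filter_upwards [hw₁.2 1 1] with x hx
    have h1 : w₁ 1 x = w₁ 1 x * w₁ 1 x := by simpa using hx
    exact (mul_left_cancel (a := w₁ 1 x) (b := (1:Δ)) (by rw [mul_one, ← h1])).symm
  have hD2μ : ∀ᵐ x ∂μ, w₂ 1 x = 1 := by
    filter_upwards [hw₂.2 1 1] with x hx
    have h1 : w₂ 1 x = w₂ 1 x * w₂ 1 x := by simpa using hx
    exact (mul_left_cancel (a := w₂ 1 x) (b := (1:Δ)) (by rw [mul_one, ← h1])).symm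
  have hψ1μ : ∀ᵐ x ∂μ, psi w₁ w₂ 1 x = 1 := by
    filter_upwards [hD1μ, hD2μ] with x h1 h2
    simp only [psi, h1, h2, inv_one, one_mul]
  have list_sum_map_const : ∀ (l : List Γ) (c : ℝ), (l.map fun _ => c).sum = l.length * c := by
    intro l c
    induction l with
    | nil => simp
    | cons a t ih => simp [ih]; ring
  -- (a) : each convex combination is within distance 2δ of u 1
  have ha : ∀ l : List Γ, l ≠ [] → nsq μ (fun z => u 1 z - V l z) ≤ 2 * δ := by
    intro l hl
    have hn : (0:ℝ) < l.length := by exact_mod_cast List.length_pos_iff.mpr hl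
    have hne : (l.length : ℝ≥0∞) ≠ 0 := by
      exact_mod_cast fun h => hl (List.length_eq_zero_iff.mp h)
    have hgb : ∀ g : Γ, nr μ (fun z => u 1 z - u g z) ≤ (2 * δ) ^ (2⁻¹:ℝ) := by
      intro g
      have h1 : nsq μ (fun z => u 1 z - u g z) ≤ 2 * δ := by
        rw [nsq_neg, hnsq_ug μ hψ1μ g]
        exact mul_le_mul_right (le_iSup (fun g' => μ {x | w₁ g' x ≠ w₂ g' x}) g) 2
      exact ENNReal.rpow_le_rpow h1 (by norm_num)
    have hsplit : (fun z => u 1 z - V l z)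
        = fun z => ((l.length:ℝ))⁻¹ * (l.map fun g => u 1 z - u g z).sum := by
      funext z
      have h1 : (l.map fun g => u 1 z - u g z).sum
          = l.length * u 1 z - (l.map fun g => u g z).sum := by
        rw [list_sum_map_sub, list_sum_map_const]
      rw [h1, hVdef]
      simp only [vv]
      field_simp
    have hnr : nr μ (fun z => u 1 z - V l z) ≤ (2 * δ) ^ (2⁻¹:ℝ) := by
      rw [hsplit, nr_smul (meas_list_sum (u := fun g z => u 1 z - u g z) (fun g => (hum 1).sub (hum g)) l) (by positivity)]
      calc ENNReal.ofReal ((l.length:ℝ))⁻¹ * nr μ (fun z => (l.map fun g => u 1 z - u g z).sum)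
          ≤ ENNReal.ofReal ((l.length:ℝ))⁻¹
            * (l.map fun g => nr μ (fun z => u 1 z - u g z)).sum :=
            mul_le_mul_right (nr_list_sum_le (F := fun g z => u 1 z - u g z) l (fun g => (hum 1).sub (hum g))) _
        _ ≤ ENNReal.ofReal ((l.length:ℝ))⁻¹
            * ((l.map fun g => nr μ (fun z => u 1 z - u g z)).length • ((2*δ) ^ (2⁻¹:ℝ))) := by
            refine mul_le_mul_right (List.sum_le_card_nsmul _ _ ?_) _
            intro x hx
            obtain ⟨g, _, rfl⟩ := List.mem_map.mp hx
            exact hgb g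
        _ ≤ (2*δ) ^ (2⁻¹:ℝ) := by
            rw [List.length_map, nsmul_eq_mul, ENNReal.ofReal_inv_of_pos hn,
              ENNReal.ofReal_natCast, ← mul_assoc,
              ENNReal.inv_mul_cancel hne (ENNReal.natCast_ne_top _), one_mul]
    calc nsq μ (fun z => u 1 z - V l z) = nr μ (fun z => u 1 z - V l z) ^ 2 := (nr_sq _).symm
      _ ≤ ((2 * δ) ^ (2⁻¹:ℝ)) ^ 2 := pow_le_pow_left' hnr 2
      _ = 2 * δ := by
          rw [← ENNReal.rpow_natCast _ 2, ← ENNReal.rpow_mul]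
          norm_num
  -- translation invariance of norms of differences of convex combinations
  have trans_key : ∀ ν : Measure X, (∀ g : Γ, MeasurePreserving (fun x : X => g • x) ν ν) →
      (∀ h : Γ, ∀ᵐ x ∂ν, ∀ g : Γ,
        psi w₁ w₂ (g * h) x = (w₁ h x)⁻¹ * psi w₁ w₂ g (h • x) * w₂ h x) →
      ∀ (l₁ l₂ : List Γ) (h : Γ),
        nsq ν (fun z => V (l₁.map (· * h)) z - V (l₂.map (· * h)) z)
          = nsq ν (fun z => V l₁ z - V l₂ z) := by
    intro ν hmp hae l₁ l₂ h
    have step1 : nsq ν (fun z => V (l₁.map (· * h)) z - V (l₂.map (· * h)) z)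
        = nsq ν ((fun z => V l₁ z - V l₂ z) ∘ TT w₁ w₂ h) := by
      apply nsq_congr_ae
      filter_upwards [hae h] with x hx d
      have hV : ∀ l : List Γ, V (l.map (· * h)) (x, d) = V l (TT w₁ w₂ h (x, d)) := by
        intro l
        rw [hVdef]
        simp only [vv, List.map_map, List.length_map]
        congr 2
        apply List.map_congr_left
        intro g _
        show u (g * h) (x, d) = u g (TT w₁ w₂ h (x, d))
        rw [hudef]
        exact (gr_psi_comp_TT (hx g) d).symm
      simp only [Function.comp]
      rw [hV l₁, hV l₂]
    rw [step1]
    exact nsq_comp_TT ((hVm l₁).sub (hVm l₂)) (hmp h)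
  -- the infimum over convex combinations
  set c : ℝ≥0∞ := ⨅ l : {l : List Γ // l ≠ []}, nsq μ (V l.1) with hcdef
  have hc1 : c ≤ 1 := by
    refine le_trans (iInf_le _ ⟨[1], by simp⟩) ?_
    have h1 : V [1] = u 1 := by rw [hVdef]; exact vv_singleton u 1
    rw [h1, hudef, nsq_gr, measure_univ]
  have hcne : c ≠ ⊤ := (lt_of_le_of_lt hc1 (by norm_num)).ne
  set η : ℕ → ℝ≥0∞ := fun j => (2:ℝ≥0∞)⁻¹ ^ j * ((4:ℝ≥0∞) * ((j:ℝ≥0∞)+1))⁻¹ with hηdef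
  have h4jne : ∀ j : ℕ, (4:ℝ≥0∞) * ((j:ℝ≥0∞)+1) ≠ ⊤ :=
    fun j => ENNReal.mul_ne_top (by norm_num)
      (ENNReal.add_ne_top.mpr ⟨ENNReal.natCast_ne_top j, ENNReal.one_ne_top⟩)
  have h4jn0 : ∀ j : ℕ, (4:ℝ≥0∞) * ((j:ℝ≥0∞)+1) ≠ 0 := by
    intro j
    refine mul_ne_zero (by norm_num) ?_
    simp
  have hη0 : ∀ j, 0 < η j := by
    intro j
    rw [hηdef]
    apply ENNReal.mul_pos
    · exact pow_ne_zero j (ENNReal.inv_ne_zero.mpr (by norm_num))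
    · exact ENNReal.inv_ne_zero.mpr (h4jne j)
  have hηgeom : ∀ j : ℕ, (4:ℝ≥0∞) * (((j:ℝ≥0∞)+1) * η j) = 2⁻¹ ^ j := by
    intro j
    rw [hηdef]
    calc (4:ℝ≥0∞) * (((j:ℝ≥0∞)+1) * ((2:ℝ≥0∞)⁻¹ ^ j * ((4:ℝ≥0∞) * ((j:ℝ≥0∞)+1))⁻¹))
        = (2:ℝ≥0∞)⁻¹ ^ j * (((4:ℝ≥0∞) * ((j:ℝ≥0∞)+1)) * ((4:ℝ≥0∞) * ((j:ℝ≥0∞)+1))⁻¹) := by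
          ring
      _ = 2⁻¹ ^ j := by rw [ENNReal.mul_inv_cancel (h4jn0 j) (h4jne j), mul_one]
  -- choose a minimizing sequence
  have hex : ∀ j : ℕ, ∃ l : List Γ, l ≠ [] ∧ nsq μ (V l) < c + η j := by
    intro j
    have hlt : (⨅ l : {l : List Γ // l ≠ []}, nsq μ (V l.1)) < c + η j :=
      lt_of_le_of_lt hcdef.ge (ENNReal.lt_add_right hcne (hη0 j).ne')
    obtain ⟨⟨l, hl⟩, h⟩ := iInf_lt_iff.mp hlt
    exact ⟨l, hl, h⟩
  choose L hLne hLlt using hex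
  -- a.e. cocycle identity for ψ under μ
  have hμae : ∀ h : Γ, ∀ᵐ x ∂μ, ∀ g : Γ,
      psi w₁ w₂ (g * h) x = (w₁ h x)⁻¹ * psi w₁ w₂ g (h • x) * w₂ h x := by
    intro h
    rw [ae_all_iff]
    intro g
    filter_upwards [hw₁.2 g h, hw₂.2 g h] with x h1 h2
    simp only [psi, h1, h2]
    group
  have hnsqV1 : ∀ l : List Γ, nsq μ (V l) ≤ 1 := by
    intro l
    rw [← nr_sq]
    calc nr μ (V l) ^ 2 ≤ 1 ^ 2 := pow_le_pow_left' (hVle1 μ inferInstance l) 2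
      _ = 1 := one_pow 2
  -- translated combinations have the same norm
  have hVmapnsq : ∀ (j:ℕ) (h : Γ), nsq μ (V ((L j).map (· * h))) = nsq μ (V (L j)) := by
    intro j h
    have h0 := trans_key μ hpmp hμae (L j) [] h
    simp only [List.map_nil] at h0
    rw [hVdef] at h0 ⊢
    simpa [vv_nil] using h0
  -- almost-minimizers are almost invariant (parallelogram law)
  have hsmall : ∀ (j:ℕ) (h : Γ),
      nsq μ (fun z => V ((L j).map (· * h)) z - V (L j) z) ≤ 4 * η j := by
    intro j h
    have hpar := nsq_parallelogram (ν := μ) (hVm ((L j).map (· * h))) (hVm (L j))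
    have hmid : (fun z => V ((L j).map (· * h)) z + V (L j) z)
        = fun z => 2 * V ((L j).map (· * h) ++ L j) z := by
      funext z
      rw [hVdef]
      simp only [vv, List.map_append, List.sum_append, List.length_append, List.length_map]
      have hn : ((L j).length : ℝ) ≠ 0 := by
        exact_mod_cast fun hh => (hLne j) (List.length_eq_zero_iff.mp hh)
      push_cast
      field_simp
      ring
    have h2V : nsq μ (fun z => 2 * V ((L j).map (· * h) ++ L j) z)
        = 4 * nsq μ (V ((L j).map (· * h) ++ L j)) := by
      rw [← nr_sq, ← nr_sq (V ((L j).map (· * h) ++ L j)),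
        nr_smul (hVm _) (by norm_num : (0:ℝ) ≤ 2), mul_pow]
      congr 1
      rw [ENNReal.ofReal_ofNat]
      norm_num
    have hcmid : c ≤ nsq μ (V ((L j).map (· * h) ++ L j)) := by
      rw [hcdef]
      exact iInf_le _ (⟨(L j).map (· * h) ++ L j, by simp [hLne j]⟩ :
        {l : List Γ // l ≠ []})
    have hFle : nsq μ (V ((L j).map (· * h))) ≤ c + η j := by
      rw [hVmapnsq j h]; exact (hLlt j).le
    have hGle : nsq μ (V (L j)) ≤ c + η j := (hLlt j).le
    have hmid4 : 4 * c ≤ nsq μ (fun z => V ((L j).map (· * h)) z + V (L j) z) := by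
      rw [hmid, h2V]
      exact mul_le_mul_right hcmid 4
    have hmidne : nsq μ (fun z => V ((L j).map (· * h)) z + V (L j) z) ≠ ⊤ := by
      rw [hmid, h2V]
      exact ENNReal.mul_ne_top (by norm_num)
        (lt_of_le_of_lt (hnsqV1 _) (by norm_num)).ne
    have hsum : nsq μ (fun z => V ((L j).map (· * h)) z - V (L j) z)
        + nsq μ (fun z => V ((L j).map (· * h)) z + V (L j) z)
        ≤ 4 * η j + nsq μ (fun z => V ((L j).map (· * h)) z + V (L j) z) := by
      rw [hpar]
      calc 2 * nsq μ (V ((L j).map (· * h))) + 2 * nsq μ (V (L j))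
          ≤ 2 * (c + η j) + 2 * (c + η j) :=
            add_le_add (mul_le_mul_right hFle 2) (mul_le_mul_right hGle 2)
        _ = 4 * η j + 4 * c := by ring
        _ ≤ 4 * η j + nsq μ (fun z => V ((L j).map (· * h)) z + V (L j) z) :=
            add_le_add_right hmid4 _
    exact (ENNReal.add_le_add_iff_right hmidne).mp hsum
  -- decomposition of integrals
  have hbind : μ = ρ.bind id := by
    refine Measure.ext fun s hs => ?_
    rw [Measure.bind_apply hs measurable_id.aemeasurable]
    exact hdecomp s hs
  have hdecX : ∀ {f : X → ℝ≥0∞}, Measurable f → ∫⁻ ν, (∫⁻ x, f x ∂ν) ∂ρ = ∫⁻ x, f x ∂μ := by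
    intro f hf
    conv_rhs => rw [hbind]
    rw [Measure.lintegral_bind measurable_id.aemeasurable hf.aemeasurable]
    rfl
  have hdecnsq : ∀ {F : X × Δ → ℝ}, Measurable F → ∫⁻ ν, nsq ν F ∂ρ = nsq μ F :=
    fun hF => hdecX (phi2_meas hF)
  have hnsqmeas : ∀ {F : X × Δ → ℝ}, Measurable F → Measurable (fun ν : Measure X => nsq ν F) :=
    fun hF => Measure.measurable_lintegral (phi2_meas hF)
  -- enumeration of the group and the control function W
  obtain ⟨eΓ, heΓ⟩ := exists_surjective_nat Γ
  set Fd : ℕ → ℕ → X × Δ → ℝ :=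
    fun j k => fun z => V ((L j).map (· * eΓ k)) z - V (L j) z with hFddef
  have hFdm : ∀ j k, Measurable (Fd j k) := fun j k => (hVm _).sub (hVm _)
  set W : Measure X → ℝ≥0∞ :=
    fun ν => ∑' j : ℕ, ∑ k ∈ Finset.range (j+1), nsq ν (Fd j k) with hWdef
  have hWmeas : Measurable W := by
    apply Measurable.ennreal_tsum
    intro j
    exact Finset.measurable_sum _ (fun k _ => hnsqmeas (hFdm j k))
  have hWint : ∫⁻ ν, W ν ∂ρ ≤ 2 := by
    rw [hWdef]
    rw [lintegral_tsum
      (fun j => (Finset.measurable_sum _ (fun k _ => hnsqmeas (hFdm j k))).aemeasurable)]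
    have hj : ∀ j : ℕ, ∫⁻ ν, ∑ k ∈ Finset.range (j+1), nsq ν (Fd j k) ∂ρ ≤ 2⁻¹ ^ j := by
      intro j
      rw [lintegral_finset_sum _ (fun k _ => hnsqmeas (hFdm j k))]
      calc ∑ k ∈ Finset.range (j+1), ∫⁻ ν, nsq ν (Fd j k) ∂ρ
          ≤ ∑ _k ∈ Finset.range (j+1), 4 * η j := by
            refine Finset.sum_le_sum fun k _ => ?_
            rw [hdecnsq (hFdm j k)]
            exact hsmall j (eΓ k)
        _ = ((j:ℝ≥0∞)+1) * (4 * η j) := by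
            rw [Finset.sum_const, Finset.card_range, nsmul_eq_mul]
            push_cast
            ring
        _ = 2⁻¹ ^ j := by rw [← hηgeom j]; ring
    calc ∑' j : ℕ, ∫⁻ ν, ∑ k ∈ Finset.range (j+1), nsq ν (Fd j k) ∂ρ
        ≤ ∑' j : ℕ, (2:ℝ≥0∞)⁻¹ ^ j := ENNReal.tsum_le_tsum hj
      _ = 2 := by
          rw [ENNReal.tsum_geometric, ENNReal.one_sub_inv_two, inv_inv]
  have hWae : ∀ᵐ ν ∂ρ, W ν < ⊤ :=
    ae_lt_top hWmeas (lt_of_le_of_lt hWint (by norm_num)).ne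
  -- measurability helpers for maps into Δ
  have heqmeas : ∀ (f g : X → Δ), Measurable f → Measurable g →
      MeasurableSet {x | f x = g x} := by
    intro f g hf hg
    have h1 : {x | f x = g x} = ⋃ d : Δ, (f ⁻¹' {d}) ∩ (g ⁻¹' {d}) := by
      ext x
      simp only [mem_setOf_eq, mem_iUnion, mem_inter_iff, mem_preimage, mem_singleton_iff]
      constructor
      · intro h; exact ⟨f x, rfl, h.symm⟩
      · rintro ⟨d, h1, h2⟩; rw [h1, h2]
    rw [h1]
    exact MeasurableSet.iUnion fun d =>
      (hf (measurableSet_singleton d)).inter (hg (measurableSet_singleton d))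
  have hmulmeas : ∀ (f g : X → Δ), Measurable f → Measurable g →
      Measurable (fun x => f x * g x) := by
    intro f g hf hg
    apply measurable_to_countable'
    intro d
    have h1 : (fun x => f x * g x) ⁻¹' {d} = ⋃ a : Δ, (f ⁻¹' {a}) ∩ (g ⁻¹' {a⁻¹ * d}) := by
      ext x
      simp only [mem_preimage, mem_singleton_iff, mem_iUnion, mem_inter_iff]
      constructor
      · intro h; exact ⟨f x, rfl, by rw [← h]; group⟩
      · rintro ⟨a, h1, h2⟩; rw [h1, h2]; group
    rw [h1]
    exact MeasurableSet.iUnion fun a =>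
      (hf (measurableSet_singleton a)).inter (hg (measurableSet_singleton _))
  have hinvmeas : ∀ f : X → Δ, Measurable f → Measurable (fun x => (f x)⁻¹) := by
    intro f hf
    apply measurable_to_countable'
    intro d
    have h1 : (fun x => (f x)⁻¹) ⁻¹' {d} = f ⁻¹' {d⁻¹} := by
      ext x
      simp only [mem_preimage, mem_singleton_iff]
      exact inv_eq_iff_eq_inv
    rw [h1]
    exact hf (measurableSet_singleton _)
  have hw1m : ∀ g : Γ, Measurable (w₁ g) := by
    intro g
    apply measurable_to_countable'
    intro d
    exact hw₁.1 g d
  have hw2m : ∀ g : Γ, Measurable (w₂ g) := by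
    intro g
    apply measurable_to_countable'
    intro d
    exact hw₂.1 g d
  have hrhsm : ∀ g h : Γ,
      Measurable (fun x => (w₁ h x)⁻¹ * psi w₁ w₂ g (h • x) * w₂ h x) :=
    fun g h => hmulmeas _ _
      (hmulmeas _ _ (hinvmeas _ (hw1m h)) ((hΨm g).comp (hmeas h))) (hw2m h)
  -- transporting a.e. statements from μ to ρ-a.e. ν
  have htrans0 : ∀ s : Set X, MeasurableSet s → (∀ᵐ x ∂μ, x ∈ s) →
      (∀ᵐ ν ∂ρ, ν sᶜ = 0) := by
    intro s hs h0
    have h1 : μ sᶜ = 0 := by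
      have := ae_iff.mp h0
      exact this
    have h2 : ∫⁻ ν, ν sᶜ ∂ρ = 0 := by rw [← hdecomp _ hs.compl, h1]
    have h3 := (lintegral_eq_zero_iff (Measure.measurable_coe hs.compl)).mp h2
    filter_upwards [h3] with ν hν
    exact hν
  have hEν : ∀ᵐ ν ∂ρ, ∀ g h : Γ,
      ν {x | psi w₁ w₂ (g*h) x = (w₁ h x)⁻¹ * psi w₁ w₂ g (h • x) * w₂ h x}ᶜ = 0 := by
    rw [ae_all_iff]
    intro g
    rw [ae_all_iff]
    intro h
    exact htrans0 _ (heqmeas _ _ (hΨm (g*h)) (hrhsm g h)) ((hμae h).mono fun x hx => hx g)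
  have hD1ν : ∀ᵐ ν ∂ρ, ν {x | w₁ 1 x = 1}ᶜ = 0 :=
    htrans0 _ (hw₁.1 1 1) (hD1μ.mono fun x hx => hx)
  have hD2ν : ∀ᵐ ν ∂ρ, ν {x | w₂ 1 x = 1}ᶜ = 0 :=
    htrans0 _ (hw₂.1 1 1) (hD2μ.mono fun x hx => hx)
  -- the fiberwise estimate
  have hfiber : ∀ᵐ ν ∂ρ, cocycleDist ν w₁ w₂
      ≤ 2 * liminf (fun j => nsq ν (fun z => u 1 z - V (L j) z)) atTop := by
    filter_upwards [hρsupp, hEν, hD1ν, hD2ν, hWae] with ν hps hE hd1 hd2 hW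
    obtain ⟨hprob, hinv⟩ := hps
    haveI := hprob
    have hmp : ∀ g : Γ, MeasurePreserving (fun x : X => g • x) ν ν :=
      fun g => ⟨hmeas g, hinv g⟩
    have hae : ∀ h : Γ, ∀ᵐ x ∂ν, ∀ g : Γ,
        psi w₁ w₂ (g * h) x = (w₁ h x)⁻¹ * psi w₁ w₂ g (h • x) * w₂ h x := by
      intro h
      rw [ae_all_iff]
      intro g
      exact ae_iff.mpr (by simpa [Set.compl_setOf] using hE g h)
    have hψ1ν : ∀ᵐ x ∂ν, psi w₁ w₂ 1 x = 1 := by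
      have e1 : ∀ᵐ x ∂ν, w₁ 1 x = 1 := ae_iff.mpr (by simpa [Set.compl_setOf] using hd1)
      have e2 : ∀ᵐ x ∂ν, w₂ 1 x = 1 := ae_iff.mpr (by simpa [Set.compl_setOf] using hd2)
      filter_upwards [e1, e2] with x h1 h2
      simp only [psi, h1, h2, inv_one, one_mul]
    refine iSup_le fun g => ?_
    obtain ⟨k₀, hk₀⟩ := heΓ g
    rw [hWdef] at hW
    have hy2 : Tendsto (fun j => nsq ν (fun z => V ((L j).map (· * g)) z - V (L j) z))
        atTop (𝓝 0) := by
      have hS : Tendsto (fun j => ∑ k ∈ Finset.range (j+1), nsq ν (Fd j k)) atTop (𝓝 0) :=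
        ENNReal.tendsto_atTop_zero_of_tsum_ne_top hW.ne
      rw [ENNReal.tendsto_atTop_zero]
      intro ε hε
      obtain ⟨N, hN⟩ := ENNReal.tendsto_atTop_zero.mp hS ε hε
      refine ⟨max N k₀, fun j hj => ?_⟩
      have hj1 : N ≤ j := le_trans (le_max_left _ _) hj
      have hj2 : k₀ ≤ j := le_trans (le_max_right _ _) hj
      have hterm : nsq ν (fun z => V ((L j).map (· * g)) z - V (L j) z)
          ≤ ∑ k ∈ Finset.range (j+1), nsq ν (Fd j k) := by
        have hk : k₀ ∈ Finset.range (j+1) := Finset.mem_range.mpr (Nat.lt_succ_of_le hj2)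
        have he : nsq ν (Fd j k₀) = nsq ν (fun z => V ((L j).map (· * g)) z - V (L j) z) := by
          simp only [hFddef, hk₀]
        rw [← he]
        exact Finset.single_le_sum (f := fun k => nsq ν (Fd j k)) (fun k _ => zero_le) hk
      exact le_trans hterm (hN j hj1)
    set b : ℕ → ℝ≥0∞ := fun j => nsq ν (fun z => u 1 z - V (L j) z) with hbdef
    have hb4 : ∀ j, b j ≤ 4 := by
      intro j
      simp only [hbdef]
      rw [← nr_sq]
      have h1 : nr ν (fun z => u 1 z - V (L j) z) ≤ 2 := by
        have e0 : (fun z => u 1 z - V (L j) z) = fun z => u 1 z + ((0:ℝ) - V (L j) z) := by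
          funext z; ring
        rw [e0]
        refine le_trans (nr_add_le (hum 1) (measurable_const.sub (hVm _))) ?_
        have e1 : nr ν (fun z => (0:ℝ) - V (L j) z) = nr ν (V (L j)) := by
          rw [nr, nsq_neg]
          have e2 : (fun z => V (L j) z - (0:ℝ)) = V (L j) := by funext z; ring
          rw [e2, nr]
        rw [e1, hnru ν hprob 1]
        calc (1:ℝ≥0∞) + nr ν (V (L j)) ≤ 1 + 1 := add_le_add_right (hVle1 ν hprob (L j)) 1
          _ = 2 := by norm_num
      calc nr ν (fun z => u 1 z - V (L j) z) ^ 2 ≤ 2 ^ 2 := pow_le_pow_left' h1 2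
        _ = 4 := by norm_num
    have hchain : ∀ j : ℕ, nr ν (fun z => u g z - u 1 z)
        ≤ 2 * (b j) ^ (2⁻¹:ℝ)
          + nr ν (fun z => V ((L j).map (· * g)) z - V (L j) z) := by
      intro j
      have m1 : Measurable fun z => u g z - V ((L j).map (· * g)) z := (hum g).sub (hVm _)
      have m2 : Measurable fun z => V ((L j).map (· * g)) z - V (L j) z := (hVm _).sub (hVm _)
      have m3 : Measurable fun z => V (L j) z - u 1 z := (hVm _).sub (hum 1)
      have hsplit : (fun z => u g z - u 1 z) = fun z =>
          (u g z - V ((L j).map (· * g)) z)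
          + ((V ((L j).map (· * g)) z - V (L j) z) + (V (L j) z - u 1 z)) := by
        funext z; ring
      have e1 : nr ν (fun z => u g z - V ((L j).map (· * g)) z) = (b j) ^ (2⁻¹:ℝ) := by
        have hug : (fun z => u g z - V ((L j).map (· * g)) z)
            = fun z => V ([(1:Γ)].map (· * g)) z - V ((L j).map (· * g)) z := by
          funext z
          congr 1
          rw [hVdef]
          simp [vv, one_mul]
        rw [nr, hug, trans_key ν hmp hae [1] (L j) g]
        have e3 : V [(1:Γ)] = u 1 := by rw [hVdef]; exact vv_singleton u 1
        rw [hbdef]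
        congr 2
        funext z
        rw [e3]
      have e2 : nr ν (fun z => V (L j) z - u 1 z) = (b j) ^ (2⁻¹:ℝ) := by
        rw [nr, nsq_neg, hbdef]
      calc nr ν (fun z => u g z - u 1 z)
          ≤ nr ν (fun z => u g z - V ((L j).map (· * g)) z)
            + nr ν (fun z =>
              (V ((L j).map (· * g)) z - V (L j) z) + (V (L j) z - u 1 z)) := by
            rw [hsplit]
            exact nr_add_le m1 (m2.add m3)
        _ ≤ nr ν (fun z => u g z - V ((L j).map (· * g)) z)
            + (nr ν (fun z => V ((L j).map (· * g)) z - V (L j) z)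
              + nr ν (fun z => V (L j) z - u 1 z)) :=
            add_le_add_right (nr_add_le m2 m3) _
        _ = 2 * (b j) ^ (2⁻¹:ℝ)
            + nr ν (fun z => V ((L j).map (· * g)) z - V (L j) z) := by
            rw [e1, e2]
            ring
    have hC2 : nsq ν (fun z => u g z - u 1 z) = 2 * ν {x | w₁ g x ≠ w₂ g x} :=
      hnsq_ug ν hψ1ν g
    have hCne : nsq ν (fun z => u g z - u 1 z) ≠ ⊤ := by
      rw [hC2]
      exact ENNReal.mul_ne_top (by norm_num) (measure_ne_top ν _)
    have hkey : nsq ν (fun z => u g z - u 1 z) ≤ 4 * liminf b atTop := by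
      apply le_four_mul_liminf hCne
      intro ε hε hεtop
      set ε' : ℝ≥0∞ := min ε 1 / 9 with hε'def
      have hε'pos : 0 < ε' := ENNReal.div_pos (lt_min hε zero_lt_one).ne' (by norm_num)
      have hε'1 : ε' ≤ 1 := by
        rw [hε'def]
        calc min ε 1 / 9 ≤ 1 / 9 := ENNReal.div_le_div_right (min_le_right _ _) 9
          _ ≤ 1 := by norm_num
      have hev : ∀ᶠ j in atTop,
          nsq ν (fun z => V ((L j).map (· * g)) z - V (L j) z) ≤ ε' * ε' := by
        obtain ⟨N, hN⟩ := ENNReal.tendsto_atTop_zero.mp hy2 (ε' * ε')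
          (ENNReal.mul_pos hε'pos.ne' hε'pos.ne')
        exact eventually_atTop.mpr ⟨N, hN⟩
      filter_upwards [hev] with j hj
      have hy : nr ν (fun z => V ((L j).map (· * g)) z - V (L j) z) ≤ ε' := by
        rw [nr]
        calc nsq ν (fun z => V ((L j).map (· * g)) z - V (L j) z) ^ (2⁻¹:ℝ)
            ≤ (ε' * ε') ^ (2⁻¹:ℝ) := ENNReal.rpow_le_rpow hj (by norm_num)
          _ = ε' := by
              rw [← sq ε', ← ENNReal.rpow_natCast ε' 2, ← ENNReal.rpow_mul]
              norm_num
      have hCle : nr ν (fun z => u g z - u 1 z) ≤ 2 * (b j) ^ (2⁻¹:ℝ) + ε' :=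
        le_trans (hchain j) (add_le_add_right hy _)
      have ha2 : (b j) ^ (2⁻¹:ℝ) ≤ 2 := by
        calc (b j) ^ (2⁻¹:ℝ) ≤ (4:ℝ≥0∞) ^ (2⁻¹:ℝ) := ENNReal.rpow_le_rpow (hb4 j) (by norm_num)
          _ = 2 := by
              rw [show (4:ℝ≥0∞) = 2^(2:ℕ) by norm_num, ← ENNReal.rpow_natCast (2:ℝ≥0∞) 2,
                ← ENNReal.rpow_mul]
              norm_num
      have hbb : ((b j) ^ (2⁻¹:ℝ))^(2:ℕ) = b j := by
        rw [← ENNReal.rpow_natCast _ 2, ← ENNReal.rpow_mul]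
        norm_num
      have hsq : nsq ν (fun z => u g z - u 1 z) ≤ 4 * b j + 9 * ε' := by
        rw [← nr_sq]
        calc nr ν (fun z => u g z - u 1 z) ^ 2 ≤ (2 * (b j) ^ (2⁻¹:ℝ) + ε') ^ 2 :=
              pow_le_pow_left' hCle 2
          _ = 4 * ((b j) ^ (2⁻¹:ℝ))^(2:ℕ) + 4 * (b j)^(2⁻¹:ℝ) * ε' + ε' * ε' := by ring
          _ = 4 * b j + 4 * (b j)^(2⁻¹:ℝ) * ε' + ε' * ε' := by rw [hbb]
          _ ≤ 4 * b j + 4 * 2 * ε' + 1 * ε' := by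
              refine add_le_add (add_le_add_right ?_ _) ?_
              · exact mul_le_mul_left (mul_le_mul_right ha2 4) ε'
              · exact mul_le_mul_left hε'1 ε'
          _ = 4 * b j + 9 * ε' := by ring
      calc nsq ν (fun z => u g z - u 1 z) ≤ 4 * b j + 9 * ε' := hsq
        _ ≤ 4 * b j + ε := by
            refine add_le_add_right ?_ _
            rw [hε'def]
            calc 9 * (min ε 1 / 9) ≤ min ε 1 := ENNReal.mul_div_le
              _ ≤ ε := min_le_left _ _
    rw [hC2] at hkey
    have h2 : (2:ℝ≥0∞) * ν {x | w₁ g x ≠ w₂ g x} ≤ 2 * (2 * liminf b atTop) := by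
      calc 2 * ν {x | w₁ g x ≠ w₂ g x} ≤ 4 * liminf b atTop := hkey
        _ = 2 * (2 * liminf b atTop) := by ring
    exact (ENNReal.mul_le_mul_iff_right (by norm_num) (by norm_num)).mp h2
  -- integrate the fiberwise estimate
  have hliminf_meas : Measurable fun ν : Measure X =>
      liminf (fun j => nsq ν (fun z => u 1 z - V (L j) z)) atTop :=
    Measurable.liminf fun j => hnsqmeas ((hum 1).sub (hVm (L j)))
  calc ∫⁻ ν, cocycleDist ν w₁ w₂ ∂ρ
      ≤ ∫⁻ ν, 2 * liminf (fun j => nsq ν (fun z => u 1 z - V (L j) z)) atTop ∂ρ :=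
        lintegral_mono_ae hfiber
    _ = 2 * ∫⁻ ν, liminf (fun j => nsq ν (fun z => u 1 z - V (L j) z)) atTop ∂ρ :=
        lintegral_const_mul 2 hliminf_meas
    _ ≤ 2 * liminf (fun j => ∫⁻ ν, nsq ν (fun z => u 1 z - V (L j) z) ∂ρ) atTop :=
        mul_le_mul_right (lintegral_liminf_le fun j => hnsqmeas ((hum 1).sub (hVm (L j)))) 2
    _ = 2 * liminf (fun j => nsq μ (fun z => u 1 z - V (L j) z)) atTop := by
        have e : (fun j => ∫⁻ ν, nsq ν (fun z => u 1 z - V (L j) z) ∂ρ)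
            = fun j => nsq μ (fun z => u 1 z - V (L j) z) :=
          funext fun j => hdecnsq ((hum 1).sub (hVm (L j)))
        rw [e]
    _ ≤ 2 * (2 * δ) := by
        refine mul_le_mul_right ?_ 2
        exact Filter.liminf_le_of_frequently_le
          (Filter.Frequently.of_forall fun j => ha (L j) (hLne j))
    _ = 4 * δ := by ring
end

section
/- Let G be a locally compact Polish group and Γ < G a countable dense subgroup. Let Δ be a countable group, φ : G → Δ a measurable map, and δ₁, δ₂ : Γ → Δ group homomorphisms such that φ(gx) = δ₁(g)·φ(x)·δ₂(g)⁻¹ for all g ∈ Γ and almost every x ∈ G (with respect to Haar measure). Then there exists an open subgroup G₀ < G such that φ is (almost everywhere) constant on every left coset of G₀, i.e. there is a map φ̃ : G/G₀ → Δ such that φ(x) = φ̃(xG₀) for almost every x ∈ G. -/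
/- STATEMENT 12: Lemma 4.1 (first part): a measurable map intertwining two
homomorphisms along a dense subgroup is constant on the left cosets of some open
subgroup. -/

open MeasureTheory Filter Set Topology ENNReal
open scoped Pointwise symmDiff

private lemma meas_eq_aux {α : Type*} [MeasurableSpace α] {Δ : Type*} [Countable Δ]
    {f g : α → Δ} (hf : ∀ d, MeasurableSet {x | f x = d}) (hg : ∀ d, MeasurableSet {x | g x = d}) :
    MeasurableSet {x | f x = g x} := by
  have : {x | f x = g x} = ⋃ d, ({x | f x = d} ∩ {x | g x = d}) := by
    ext x
    simp only [mem_setOf_eq, mem_iUnion, mem_inter_iff]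
    exact ⟨fun h => ⟨g x, h, rfl⟩, fun ⟨d, h1, h2⟩ => h1.trans h2.symm⟩
  rw [this]
  exact MeasurableSet.iUnion fun d => (hf d).inter (hg d)

private lemma smul_symmDiff_set {G : Type*} [Group G] (a : G) (s t : Set G) :
    a • (s ∆ t) = (a • s) ∆ (a • t) := by
  simp only [Set.symmDiff_def, Set.smul_set_union, Set.smul_set_sdiff]

/-- Continuity of translation: for a finite-measure set `B`, the measure of `g•B ∆ B`
is small for `g` near `1`. -/
private lemma translate_symmDiff_small
    {G : Type*} [Group G] [TopologicalSpace G] [IsTopologicalGroup G]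
    [LocallyCompactSpace G] [PolishSpace G] [MeasurableSpace G] [BorelSpace G]
    (μ : Measure G) [μ.IsHaarMeasure]
    {B : Set G} (hB : MeasurableSet B) (hBfin : μ B ≠ ∞) {ε : ℝ≥0∞} (hε : ε ≠ 0) :
    ∀ᶠ g in 𝓝 (1:G), μ ((g • B) ∆ B) < ε := by
  have h4 : ε / 2 / 2 ≠ 0 := by
    simp [ENNReal.div_eq_zero_iff, hε]
  obtain ⟨K, hKB, hKco, hKcl, hKd⟩ := hB.exists_isCompact_isClosed_diff_lt hBfin h4
  have hev1 : ∀ᶠ g in 𝓝 (1:G), μ (g • K \ K) < ε / 2 / 2 :=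
    eventually_nhds_one_measure_smul_diff_lt hKco hKcl h4 (μ := μ)
  have hinvt : Tendsto (fun g : G => g⁻¹) (𝓝 1) (𝓝 1) := by
    simpa using (continuous_inv.tendsto (1:G))
  filter_upwards [hev1, hinvt.eventually hev1] with g hg hg'
  have hBK : B ∆ K = B \ K := by
    rw [symmDiff_comm]; exact symmDiff_of_le hKB
  have hgBK : (g • B) ∆ (g • K) = g • (B \ K) := by
    rw [← smul_symmDiff_set, hBK]
  have htri : (g • B) ∆ B ⊆ (((g • B) ∆ (g • K)) ∪ ((g • K) ∆ K)) ∪ (K ∆ B) := by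
    intro x hx
    have h1 := symmDiff_triangle (g • B) K B
    have h2 := symmDiff_triangle (g • B) (g • K) K
    rcases h1 hx with h | h
    · exact Or.inl (h2 h)
    · exact Or.inr h
  have hKgK : μ (K \ g • K) < ε / 2 / 2 := by
    have : K \ g • K = g • (g⁻¹ • K \ K) := by
      rw [Set.smul_set_sdiff, smul_inv_smul]
    rw [this, measure_smul]
    exact hg'
  calc μ ((g • B) ∆ B) ≤ μ ((((g • B) ∆ (g • K)) ∪ ((g • K) ∆ K)) ∪ (K ∆ B)) :=
        measure_mono htri
    _ ≤ (μ ((g • B) ∆ (g • K)) + μ ((g • K) ∆ K)) + μ (K ∆ B) :=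
        le_trans (measure_union_le _ _) (by gcongr; exact measure_union_le _ _)
    _ ≤ (μ ((g • B) ∆ (g • K)) + (μ (g • K \ K) + μ (K \ g • K))) + μ (K ∆ B) := by
        gcongr
        rw [Set.symmDiff_def]
        exact measure_union_le _ _
    _ < (ε / 2 / 2 + (ε / 2 / 2 + ε / 2 / 2)) + ε / 2 / 2 := by
        have e1 : μ ((g • B) ∆ (g • K)) < ε / 2 / 2 := by
          rw [hgBK, measure_smul]; exact hKd
        have e2 : μ (K ∆ B) < ε / 2 / 2 := by
          rw [symmDiff_comm, hBK]; exact hKd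
        exact ENNReal.add_lt_add (ENNReal.add_lt_add e1 (ENNReal.add_lt_add hg hKgK)) e2
    _ ≤ ε := by
        rw [ENNReal.add_halves, add_right_comm, ENNReal.add_halves, ENNReal.add_halves]

/-- Ergodicity of the left translation action of a dense subgroup. -/
private lemma erg_aux
    {G : Type*} [Group G] [TopologicalSpace G] [IsTopologicalGroup G]
    [LocallyCompactSpace G] [PolishSpace G] [MeasurableSpace G] [BorelSpace G]
    (μ : Measure G) [μ.IsHaarMeasure]
    (Γ : Subgroup G) (hΓdense : Dense (Γ : Set G))
    {A : Set G} (hA : MeasurableSet A)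
    (hinv : ∀ γ : Γ, μ ((((γ : G)) • A) ∆ A) = 0) :
    μ A = 0 ∨ μ Aᶜ = 0 := by
  have hT2 : T2Space G := inferInstance
  -- Step 1: the invariance extends to all of G
  have step1 : ∀ g : G, μ ((g • A) ∆ A) = 0 := by
    intro g
    have main : ∀ C : Set G, IsCompact C → μ (((g • A) ∆ A) ∩ C) = 0 := by
      intro C hC
      by_contra h0
      set ε := μ (((g • A) ∆ A) ∩ C) with hε
      have hεne : ε ≠ 0 := h0
      obtain ⟨V₀, hV₀co, hV₀nhds⟩ := exists_compact_mem_nhds (1 : G)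
      -- the auxiliary compact set D
      set D : Set G := (C ∪ g⁻¹ • C) ∪ (V₀⁻¹ * (g⁻¹ • C)) with hD
      have hgC : IsCompact (g⁻¹ • C) := hC.smul g⁻¹
      have hDco : IsCompact D := ((hC.union hgC).union (hV₀co.inv.mul hgC))
      have hDmeas : MeasurableSet D := hDco.isClosed.measurableSet
      set B : Set G := A ∩ D with hB
      have hBmeas : MeasurableSet B := hA.inter hDmeas
      have hBfin : μ B ≠ ∞ :=
        (lt_of_le_of_lt (measure_mono inter_subset_right) hDco.measure_lt_top).ne
      obtain ⟨W', hW'nhds, hW'⟩ :=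
        eventually_iff_exists_mem.mp (translate_symmDiff_small μ hBmeas hBfin hεne)
      obtain ⟨U, hUsub, hUopen, hU1⟩ := mem_nhds_iff.mp (inter_mem hV₀nhds hW'nhds)
      obtain ⟨γ, hγΓ, hγU⟩ := hΓdense.exists_mem_open (hUopen.smul g) ⟨g, ⟨1, hU1, mul_one g⟩⟩
      obtain ⟨v, hvU, hγv⟩ := hγU
      have hvV₀ : v ∈ V₀ := (hUsub hvU).1
      have hvW' : v ∈ W' := (hUsub hvU).2
      have hγ : (γ : G) = g * v := by rw [← hγv]; rfl
      -- the key set identity on C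
      have hmemA : ∀ x ∈ C, (x ∈ g • A ↔ x ∈ g • B) ∧ (x ∈ γ • A ↔ x ∈ γ • B) := by
        intro x hxC
        have hg1 : g⁻¹ • x ∈ g⁻¹ • C := smul_mem_smul_set hxC
        have hgD : g⁻¹ • x ∈ D := Or.inl (Or.inr hg1)
        have hγD : γ⁻¹ • x ∈ D := by
          have : γ⁻¹ • x = v⁻¹ • (g⁻¹ • x) := by
            rw [hγ, mul_inv_rev, mul_smul]
          rw [this]
          refine Or.inr ?_
          have : v⁻¹ • (g⁻¹ • x) = v⁻¹ * (g⁻¹ • x) := rfl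
          rw [this]
          exact Set.mul_mem_mul (Set.inv_mem_inv.mpr hvV₀) hg1
        constructor
        · rw [mem_smul_set_iff_inv_smul_mem, mem_smul_set_iff_inv_smul_mem]
          exact ⟨fun h => ⟨h, hgD⟩, fun h => h.1⟩
        · rw [mem_smul_set_iff_inv_smul_mem, mem_smul_set_iff_inv_smul_mem]
          exact ⟨fun h => ⟨h, hγD⟩, fun h => h.1⟩
      have hsetEq : ((g • A) ∆ (γ • A)) ∩ C = ((g • B) ∆ (γ • B)) ∩ C := by
        ext x
        simp only [mem_inter_iff, Set.mem_symmDiff]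
        constructor
        · rintro ⟨h, hxC⟩
          refine ⟨?_, hxC⟩
          rcases h with ⟨h1, h2⟩ | ⟨h1, h2⟩
          · exact Or.inl ⟨((hmemA x hxC).1).mp h1, fun hh => h2 (((hmemA x hxC).2).mpr hh)⟩
          · exact Or.inr ⟨((hmemA x hxC).2).mp h1, fun hh => h2 (((hmemA x hxC).1).mpr hh)⟩
        · rintro ⟨h, hxC⟩
          refine ⟨?_, hxC⟩
          rcases h with ⟨h1, h2⟩ | ⟨h1, h2⟩
          · exact Or.inl ⟨((hmemA x hxC).1).mpr h1, fun hh => h2 (((hmemA x hxC).2).mp hh)⟩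
          · exact Or.inr ⟨((hmemA x hxC).2).mpr h1, fun hh => h2 (((hmemA x hxC).1).mp hh)⟩
      -- estimate
      have hsub : ((g • A) ∆ A) ∩ C ⊆ (((g • A) ∆ (γ • A)) ∩ C) ∪ (((γ : G) • A) ∆ A) := by
        intro x hx
        rcases symmDiff_triangle (g • A) ((γ : G) • A) A hx.1 with h | h
        · exact Or.inl ⟨h, hx.2⟩
        · exact Or.inr h
      have hmain : μ (((g • A) ∆ (γ • A)) ∩ C) < ε := by
        rw [hsetEq]
        calc μ (((g • B) ∆ (γ • B)) ∩ C) ≤ μ ((g • B) ∆ (γ • B)) :=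
              measure_mono inter_subset_left
          _ = μ ((v • B) ∆ B) := by
              rw [hγ, mul_smul, ← smul_symmDiff_set, measure_smul, symmDiff_comm]
          _ < ε := hW' v hvW'
      have : ε < ε := by
        calc ε = μ (((g • A) ∆ A) ∩ C) := hε
          _ ≤ μ ((((g • A) ∆ (γ • A)) ∩ C) ∪ (((γ : G) • A) ∆ A)) := measure_mono hsub
          _ ≤ μ (((g • A) ∆ (γ • A)) ∩ C) + μ (((γ : G) • A) ∆ A) := measure_union_le _ _
          _ = μ (((g • A) ∆ (γ • A)) ∩ C) + 0 := by rw [hinv ⟨γ, hγΓ⟩]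
          _ < ε := by rwa [add_zero]
      exact lt_irrefl _ this
    have hcover : (g • A) ∆ A = ⋃ n, ((g • A) ∆ A) ∩ compactCovering G n := by
      rw [← inter_iUnion, iUnion_compactCovering, inter_univ]
    rw [hcover]
    exact measure_iUnion_null fun n => main _ (isCompact_compactCovering G n)
  -- Step 2: Fubini
  rw [or_iff_not_imp_left]
  intro hA0
  set T : Set (G × G) := {p : G × G | p.1 * p.2 ∈ A ∧ p.2 ∈ Aᶜ} with hT
  have hTmeas : MeasurableSet T :=
    ((measurable_fst.mul measurable_snd) hA).inter (measurable_snd hA.compl)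
  have hT0 : μ.prod μ T = 0 := by
    rw [Measure.prod_apply hTmeas]
    have hint : ∀ g : G, μ (Prod.mk g ⁻¹' T) = 0 := by
      intro g
      have hsub : Prod.mk g ⁻¹' T ⊆ (g⁻¹ • A) ∆ A := by
        intro x hx
        have hx1 : g * x ∈ A := hx.1
        have hx2 : x ∉ A := hx.2
        have : x ∈ g⁻¹ • A := by
          rw [mem_smul_set_iff_inv_smul_mem, inv_inv]; exact hx1
        exact Or.inl ⟨this, hx2⟩
      exact measure_mono_null hsub (step1 g⁻¹)
    simp only [hint, lintegral_zero]
  rw [Measure.prod_apply_symm hTmeas] at hT0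
  have hae : ∀ᵐ x ∂μ, μ ((fun g => (g, x)) ⁻¹' T) = 0 :=
    (lintegral_eq_zero_iff (measurable_measure_prodMk_right hTmeas)).mp hT0
  refine measure_mono_null ?_ (ae_iff.mp hae)
  intro x hx
  simp only [mem_setOf_eq]
  intro hcon
  have : (fun g => (g, x)) ⁻¹' T = (fun g => g * x) ⁻¹' A := by
    ext g
    simp only [mem_preimage, hT, mem_setOf_eq, mem_compl_iff]
    exact ⟨fun h => h.1, fun h => ⟨h, hx⟩⟩
  rw [this] at hcon
  exact measure_mul_right_ne_zero μ hA0 x hcon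

theorem intertwiner_constant_on_open_cosets
    {G : Type*} [Group G] [TopologicalSpace G] [IsTopologicalGroup G]
    [LocallyCompactSpace G] [PolishSpace G]
    [MeasurableSpace G] [BorelSpace G]
    -- m_G : a left invariant Haar measure on G
    (μ : Measure G) [μ.IsHaarMeasure]
    -- Γ : a countable dense subgroup of G
    (Γ : Subgroup G) [Countable Γ] (hΓdense : Dense (Γ : Set G))
    -- Δ : a countable group, φ : G → Δ measurable, δ₁, δ₂ : Γ → Δ homomorphisms
    {Δ : Type*} [Group Δ] [Countable Δ]
    (φ : G → Δ) (hφmeas : ∀ d : Δ, MeasurableSet {x | φ x = d})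
    (δ₁ δ₂ : Γ →* Δ)
    -- φ(gx) = δ₁(g) φ(x) δ₂(g)⁻¹ for all g ∈ Γ and almost every x ∈ G
    (hφ : ∀ g : Γ, ∀ᵐ x ∂μ, φ ((g : G) * x) = δ₁ g * φ x * (δ₂ g)⁻¹) :
    -- there is an open subgroup G₀ < G such that φ is a.e. constant on every left
    -- coset of G₀: there is φ̃ : G/G₀ → Δ with φ(x) = φ̃(xG₀) for almost every x
    ∃ G₀ : OpenSubgroup G,
      ∃ φt : G ⧸ G₀.toSubgroup → Δ,
        ∀ᵐ x ∂μ, φ x = φt (QuotientGroup.mk x) := by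
  classical
  -- the set E of pairs (x, z) with φ(xz) = φ(x)
  set E : Set (G × G) := {p : G × G | φ (p.1 * p.2) = φ p.1} with hEdef
  have hEmeas : MeasurableSet E := by
    apply meas_eq_aux (f := fun p : G × G => φ (p.1 * p.2)) (g := fun p : G × G => φ p.1)
    · intro d; exact (measurable_fst.mul measurable_snd) (hφmeas d)
    · intro d; exact measurable_fst (hφmeas d)
  -- invariance of E under the Γ-action on the first coordinate, mod null
  have hprodinv : ∀ γ : Γ,
      μ.prod μ (((fun p : G × G => ((γ : G) * p.1, p.2)) ⁻¹' E) ∆ E) = 0 := by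
    intro γ
    set Ng : Set G := {w | φ ((γ : G) * w) = δ₁ γ * φ w * (δ₂ γ)⁻¹} with hNgdef
    have hNgmeas : MeasurableSet Ng := by
      apply meas_eq_aux (f := fun w => φ ((γ : G) * w))
        (g := fun w => δ₁ γ * φ w * (δ₂ γ)⁻¹)
      · intro d
        exact (measurable_const_mul (γ : G)) (hφmeas d)
      · intro d
        have : {w | δ₁ γ * φ w * (δ₂ γ)⁻¹ = d} = {w | φ w = (δ₁ γ)⁻¹ * d * δ₂ γ} := by
          ext w
          constructor
          · intro h; simp only [mem_setOf_eq] at h ⊢; rw [← h]; group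
          · intro h; simp only [mem_setOf_eq] at h ⊢; rw [h]; group
        rw [this]; exact hφmeas _
    have hNgnull : μ Ngᶜ = 0 := by
      have := hφ γ
      rw [ae_iff] at this
      exact this
    have hsub : (((fun p : G × G => ((γ : G) * p.1, p.2)) ⁻¹' E) ∆ E) ⊆
        (Prod.fst ⁻¹' Ngᶜ) ∪ ((fun p : G × G => p.1 * p.2) ⁻¹' Ngᶜ) := by
      intro p hp
      by_contra hcon
      simp only [mem_union, mem_preimage, mem_compl_iff, not_or, not_not] at hcon
      obtain ⟨h1, h2⟩ := hcon
      have h1' : φ ((γ : G) * p.1) = δ₁ γ * φ p.1 * (δ₂ γ)⁻¹ := h1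
      have h2' : φ ((γ : G) * (p.1 * p.2)) = δ₁ γ * φ (p.1 * p.2) * (δ₂ γ)⁻¹ := h2
      have hiff : p ∈ (fun p : G × G => ((γ : G) * p.1, p.2)) ⁻¹' E ↔ p ∈ E := by
        show φ ((γ : G) * p.1 * p.2) = φ ((γ : G) * p.1) ↔ φ (p.1 * p.2) = φ p.1
        rw [mul_assoc, h2', h1']
        constructor
        · intro h
          exact mul_left_cancel (mul_right_cancel h)
        · intro h; rw [h]
      rcases Set.mem_symmDiff.mp hp with ⟨ha, hb⟩ | ⟨ha, hb⟩
      · exact hb (hiff.mp ha)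
      · exact hb (hiff.mpr ha)
    refine measure_mono_null hsub (measure_union_null ?_ ?_)
    · have : Prod.fst ⁻¹' Ngᶜ = Ngᶜ ×ˢ (univ : Set G) := by
        ext p; simp [Set.mem_prod]
      rw [this, Measure.prod_prod, hNgnull, zero_mul]
    · have : (fun p : G × G => p.1 * p.2) ⁻¹' Ngᶜ =
          (fun z : G × G => (z.1, z.1 * z.2)) ⁻¹' ((univ : Set G) ×ˢ Ngᶜ) := by
        ext p; simp [Set.mem_prod]
      rw [this, (measurePreserving_prod_mul μ μ).measure_preimage
        ((MeasurableSet.univ.prod hNgmeas.compl)).nullMeasurableSet,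
        Measure.prod_prod, hNgnull, mul_zero]
  -- a.e. z, the section of E at z is Γ-invariant mod null
  have hsecae : ∀ᵐ z ∂μ, ∀ γ : Γ,
      μ ((((γ : G)) • ((fun x => (x, z)) ⁻¹' E)) ∆ ((fun x => (x, z)) ⁻¹' E)) = 0 := by
    rw [ae_all_iff]
    intro γ
    have hmap : Measurable (fun p : G × G => ((γ : G)⁻¹ * p.1, p.2)) :=
      (measurable_const.mul measurable_fst).prodMk measurable_snd
    have hFmeas : MeasurableSet (((fun p : G × G => ((γ : G)⁻¹ * p.1, p.2)) ⁻¹' E) ∆ E) :=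
      (hmap hEmeas).symmDiff hEmeas
    have h0 := hprodinv γ⁻¹
    have hco : ((γ⁻¹ : Γ) : G) = (γ : G)⁻¹ := rfl
    rw [hco] at h0
    rw [Measure.prod_apply_symm hFmeas] at h0
    have hae := (lintegral_eq_zero_iff (measurable_measure_prodMk_right hFmeas)).mp h0
    filter_upwards [hae] with z hz
    have hset : (fun x => (x, z)) ⁻¹' (((fun p : G × G => ((γ : G)⁻¹ * p.1, p.2)) ⁻¹' E) ∆ E)
        = (((γ : G)) • ((fun x => (x, z)) ⁻¹' E)) ∆ ((fun x => (x, z)) ⁻¹' E) := by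
      ext x
      have hmem : x ∈ ((γ : G)) • ((fun x => (x, z)) ⁻¹' E) ↔ ((γ : G)⁻¹ * x, z) ∈ E := by
        rw [mem_smul_set_iff_inv_smul_mem]
        rfl
      simp only [mem_preimage, Set.mem_symmDiff, hmem]
    rw [← hset]
    exact hz
  -- the a.e. dichotomy for sections
  have hdich : ∀ᵐ z ∂μ,
      μ ((fun x => (x, z)) ⁻¹' E) = 0 ∨ μ ((fun x => (x, z)) ⁻¹' Eᶜ) = 0 := by
    filter_upwards [hsecae] with z hz
    have hsecmeas : MeasurableSet ((fun x => (x, z)) ⁻¹' E) :=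
      (measurable_id.prodMk measurable_const) hEmeas
    have := erg_aux μ Γ hΓdense hsecmeas hz
    rcases this with h | h
    · exact Or.inl h
    · right
      have : (fun x => (x, z)) ⁻¹' Eᶜ = ((fun x => (x, z)) ⁻¹' E)ᶜ := rfl
      rw [this]
      exact h
  -- the set Z
  set Z : Set G := {z | μ ((fun x => (x, z)) ⁻¹' Eᶜ) = 0} with hZdef
  have hZmeas : MeasurableSet Z :=
    (measurable_measure_prodMk_right (μ := μ) hEmeas.compl) (measurableSet_singleton 0)
  -- μ Z > 0
  have hμuniv : μ (univ : Set G) ≠ 0 := by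
    intro h
    have := isOpen_univ.measure_pos μ ⟨(1 : G), trivial⟩
    rw [h] at this
    exact lt_irrefl _ this
  have hZpos : 0 < μ Z := by
    -- first, μ.prod μ E > 0
    obtain ⟨K, hKco, hKnhds⟩ := exists_compact_mem_nhds (1 : G)
    have hKpos : μ K ≠ 0 := by
      have h1 : 0 < μ (interior K) :=
        isOpen_interior.measure_pos μ ⟨1, mem_interior_iff_mem_nhds.mpr hKnhds⟩
      exact fun h => (lt_of_lt_of_le h1 (measure_mono interior_subset)).ne' h
    obtain ⟨d₀, hd₀⟩ : ∃ d : Δ, μ ({x | φ x = d} ∩ K) ≠ 0 := by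
      by_contra hc
      push_neg at hc
      apply hKpos
      have : K = ⋃ d : Δ, ({x | φ x = d} ∩ K) := by
        ext x
        simp only [mem_iUnion, mem_inter_iff, mem_setOf_eq]
        exact ⟨fun h => ⟨φ x, rfl, h⟩, fun ⟨d, _, h⟩ => h⟩
      rw [this]
      exact measure_iUnion_null fun d => hc d
    set B0 : Set G := {x | φ x = d₀} ∩ K with hB0
    set E' : Set (G × G) := {p : G × G | φ p.2 = φ p.1} with hE'def
    have hE'meas : MeasurableSet E' := by
      apply meas_eq_aux (f := fun p : G × G => φ p.2) (g := fun p : G × G => φ p.1)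
      · intro d; exact measurable_snd (hφmeas d)
      · intro d; exact measurable_fst (hφmeas d)
    have hEE' : μ.prod μ E = μ.prod μ E' := by
      have : E = (fun z : G × G => (z.1, z.1 * z.2)) ⁻¹' E' := by
        ext p; simp [hEdef, hE'def]
      rw [this]
      exact (measurePreserving_prod_mul μ μ).measure_preimage hE'meas.nullMeasurableSet
    have hEpos : 0 < μ.prod μ E := by
      rw [hEE']
      have hsub : B0 ×ˢ B0 ⊆ E' := by
        rintro ⟨a, b⟩ ⟨ha, hb⟩
        simp only [hE'def, mem_setOf_eq]
        rw [ha.1, hb.1]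
      calc (0 : ℝ≥0∞) < μ B0 * μ B0 := by
            rw [pos_iff_ne_zero]
            exact mul_ne_zero hd₀ hd₀
        _ = μ.prod μ (B0 ×ˢ B0) := (Measure.prod_prod _ _).symm
        _ ≤ μ.prod μ E' := measure_mono hsub
    rw [pos_iff_ne_zero]
    intro hZ0
    have hZc : ∀ᵐ z ∂μ, z ∉ Z := by
      rw [ae_iff]
      simpa [not_not] using hZ0
    have hallzero : ∀ᵐ z ∂μ, μ ((fun x => (x, z)) ⁻¹' E) = 0 := by
      filter_upwards [hdich, hZc] with z h1 h2
      rcases h1 with h | h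
      · exact h
      · exact absurd h h2
    have : μ.prod μ E = 0 := by
      rw [Measure.prod_apply_symm hEmeas]
      rw [lintegral_congr_ae (g := fun _ => 0) hallzero, lintegral_zero]
    rw [this] at hEpos
    exact lt_irrefl _ hEpos
  -- the subgroup H
  set Hsub : Subgroup G :=
    { carrier := {g : G | ∀ᵐ x ∂μ, φ (x * g) = φ x}
      one_mem' := by simp
      mul_mem' := by
        intro a b ha hb
        simp only [mem_setOf_eq] at ha hb ⊢
        have hb' : ∀ᵐ x ∂μ, φ (x * a * b) = φ (x * a) := by
          have h1 : μ {x | ¬ φ (x * b) = φ x} = 0 := ae_iff.mp hb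
          have h2 : μ ((fun x => x * a) ⁻¹' {x | ¬ φ (x * b) = φ x}) = 0 :=
            (measure_mul_right_null μ a).mpr h1
          rw [ae_iff]
          exact measure_mono_null (fun x hx => hx) h2
        filter_upwards [ha, hb'] with x h1 h2
        rw [← mul_assoc, h2, h1]
      inv_mem' := by
        intro a ha
        simp only [mem_setOf_eq] at ha ⊢
        have h1 : μ {x | ¬ φ (x * a) = φ x} = 0 := ae_iff.mp ha
        have h2 : μ ((fun x => x * a⁻¹) ⁻¹' {x | ¬ φ (x * a) = φ x}) = 0 :=
          (measure_mul_right_null μ a⁻¹).mpr h1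
        rw [ae_iff]
        refine measure_mono_null ?_ h2
        intro x hx
        simp only [mem_preimage, mem_setOf_eq, inv_mul_cancel_right]
        simp only [mem_setOf_eq] at hx
        intro hc
        exact hx hc.symm } with hHdef
  have hZH : Z ⊆ (Hsub : Set G) := by
    intro z hz
    simp only [hHdef, Subgroup.coe_set_mk, mem_setOf_eq]
    show ∀ᵐ x ∂μ, φ (x * z) = φ x
    rw [ae_iff]
    exact hz
  -- H is open
  have hHnhds : (Hsub : Set G) ∈ 𝓝 (1 : G) := by
    refine mem_of_superset (Measure.div_mem_nhds_one_of_haar_pos μ Z hZmeas hZpos) ?_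
    intro w hw
    rw [Set.mem_div] at hw
    obtain ⟨a, ha, b, hb, hab⟩ := hw
    rw [← hab]
    exact Hsub.div_mem (hZH ha) (hZH hb)
  have hHopen : IsOpen (Hsub : Set G) := Subgroup.isOpen_of_mem_nhds Hsub hHnhds
  have hHmeas : MeasurableSet (Hsub : Set G) := hHopen.measurableSet
  -- μ (H \ Z) = 0
  have hEZ : μ.prod μ (E ∆ ((univ : Set G) ×ˢ Z)) = 0 := by
    have hm : MeasurableSet (E ∆ ((univ : Set G) ×ˢ Z)) :=
      hEmeas.symmDiff (MeasurableSet.univ.prod hZmeas)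
    rw [Measure.prod_apply_symm hm]
    have hptae : ∀ᵐ z ∂μ, μ ((fun x => (x, z)) ⁻¹' (E ∆ ((univ : Set G) ×ˢ Z))) = 0 := by
      filter_upwards [hdich] with z hz
      by_cases hzZ : z ∈ Z
      · refine measure_mono_null ?_ hzZ
        intro x hx
        rcases Set.mem_symmDiff.mp hx with ⟨h1, h2⟩ | ⟨h1, h2⟩
        · exact absurd ⟨trivial, hzZ⟩ h2
        · exact h2
      · rcases hz with h | h
        · refine measure_mono_null ?_ h
          intro x hx
          rcases Set.mem_symmDiff.mp hx with ⟨h1, h2⟩ | ⟨h1, h2⟩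
          · exact h1
          · exact absurd hzZ (fun hc => hc h1.2)
        · exact absurd h hzZ
    rw [lintegral_congr_ae (g := fun _ => 0) hptae, lintegral_zero]
  have hWnull : μ ((Hsub : Set G) \ Z) = 0 := by
    set W : Set G := (Hsub : Set G) \ Z with hWdef
    have hWmeas : MeasurableSet W := hHmeas.diff hZmeas
    have h1 : μ.prod μ (((univ : Set G) ×ˢ W) \ E) = 0 := by
      have hm : MeasurableSet (((univ : Set G) ×ˢ W) \ E) :=
        (MeasurableSet.univ.prod hWmeas).diff hEmeas
      rw [Measure.prod_apply_symm hm]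
      have hpt : ∀ z : G, μ ((fun x => (x, z)) ⁻¹' (((univ : Set G) ×ˢ W) \ E)) = 0 := by
        intro z
        by_cases hzW : z ∈ W
        · have hzH : z ∈ (Hsub : Set G) := hzW.1
          have : ∀ᵐ x ∂μ, φ (x * z) = φ x := hzH
          have hnull : μ {x | ¬ φ (x * z) = φ x} = 0 := ae_iff.mp this
          refine measure_mono_null ?_ hnull
          intro x hx
          exact hx.2
        · refine measure_mono_null ?_ (measure_empty (μ := μ))
          intro x hx
          exact absurd hx.1.2 hzW
      simp only [hpt, lintegral_zero]
    have hsub : ((univ : Set G) ×ˢ W) ⊆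
        (((univ : Set G) ×ˢ W) \ E) ∪ (E ∆ ((univ : Set G) ×ˢ Z)) := by
      intro p hp
      by_cases hpE : p ∈ E
      · right
        exact Set.mem_symmDiff.mpr (Or.inl ⟨hpE, fun hc => hp.2.2 hc.2⟩)
      · exact Or.inl ⟨hp, hpE⟩
    have h2 : μ.prod μ ((univ : Set G) ×ˢ W) = 0 :=
      measure_mono_null hsub (measure_union_null h1 hEZ)
    rw [Measure.prod_prod] at h2
    rcases mul_eq_zero.mp h2 with h | h
    · exact absurd h hμuniv
    · exact h
  -- the good points
  have hBadnull : μ.prod μ (((univ : Set G) ×ˢ (Hsub : Set G)) \ E) = 0 := by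
    refine measure_mono_null ?_
      (measure_union_null
        (by rw [Measure.prod_prod, hWnull, mul_zero] :
          μ.prod μ ((univ : Set G) ×ˢ ((Hsub : Set G) \ Z)) = 0)
        hEZ)
    intro p hp
    by_cases hpZ : p.2 ∈ Z
    · right
      exact Set.mem_symmDiff.mpr (Or.inr ⟨⟨trivial, hpZ⟩, hp.2⟩)
    · exact Or.inl ⟨trivial, hp.1.2, hpZ⟩
  have hBadmeas : MeasurableSet (((univ : Set G) ×ˢ (Hsub : Set G)) \ E) :=
    (MeasurableSet.univ.prod hHmeas).diff hEmeas
  have hGood : ∀ᵐ x ∂μ,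
      μ (Prod.mk x ⁻¹' (((univ : Set G) ×ˢ (Hsub : Set G)) \ E)) = 0 := by
    rw [Measure.prod_apply hBadmeas] at hBadnull
    exact (lintegral_eq_zero_iff (measurable_measure_prodMk_left hBadmeas)).mp hBadnull
  -- define φt
  refine ⟨⟨Hsub, hHopen⟩, ?_⟩
  set φt : G ⧸ Hsub → Δ := fun c =>
    if h : ∃ d : Δ, ∀ᵐ y ∂μ, (QuotientGroup.mk y : G ⧸ Hsub) = c → φ y = d
    then h.choose else 1 with hφtdef
  refine ⟨φt, ?_⟩
  filter_upwards [hGood] with x hx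
  have hx' : μ {z | z ∈ (Hsub : Set G) ∧ φ (x * z) ≠ φ x} = 0 := by
    refine measure_mono_null ?_ hx
    intro z hz
    exact ⟨⟨trivial, hz.1⟩, hz.2⟩
  -- φ is a.e. equal to φ x on the coset of x
  have hP : ∀ᵐ y ∂μ, (QuotientGroup.mk y : G ⧸ Hsub) = QuotientGroup.mk x → φ y = φ x := by
    rw [ae_iff]
    have htrans : μ ((fun y => x⁻¹ * y) ⁻¹' {z | z ∈ (Hsub : Set G) ∧ φ (x * z) ≠ φ x}) = 0 := by
      rw [measure_preimage_mul]
      exact hx'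
    refine measure_mono_null ?_ htrans
    intro y hy
    simp only [mem_setOf_eq, Classical.not_imp, not_not] at hy
    obtain ⟨hy1, hy2⟩ := hy
    have hmem : x⁻¹ * y ∈ Hsub := by
      have := QuotientGroup.eq.mp hy1
      have h2 := Hsub.inv_mem this
      simpa using h2
    refine ⟨hmem, ?_⟩
    rw [mul_inv_cancel_left]
    exact hy2
  have hex : ∃ d : Δ, ∀ᵐ y ∂μ,
      (QuotientGroup.mk y : G ⧸ Hsub) = QuotientGroup.mk x → φ y = d := ⟨φ x, hP⟩
  have hφtval : φt (QuotientGroup.mk x) = hex.choose := by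
    rw [hφtdef]
    exact dif_pos hex
  rw [hφtval]
  by_contra hne
  have hspec := hex.choose_spec
  have hnever : ∀ᵐ y ∂μ, ¬ ((QuotientGroup.mk y : G ⧸ Hsub) = QuotientGroup.mk x) := by
    filter_upwards [hP, hspec] with y h1 h2 h3
    exact hne ((h1 h3).symm.trans (h2 h3))
  have hnull : μ {y : G | (QuotientGroup.mk y : G ⧸ Hsub) = QuotientGroup.mk x} = 0 := by
    have := ae_iff.mp hnever
    simpa [not_not] using this
  have hopenset : IsOpen {y : G | (QuotientGroup.mk y : G ⧸ Hsub) = QuotientGroup.mk x} := by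
    have hseteq : {y : G | (QuotientGroup.mk y : G ⧸ Hsub) = QuotientGroup.mk x}
        = (fun y => x⁻¹ * y) ⁻¹' (Hsub : Set G) := by
      ext y
      simp only [mem_setOf_eq, mem_preimage, SetLike.mem_coe]
      constructor
      · intro h
        have := QuotientGroup.eq.mp h
        simpa using Hsub.inv_mem this
      · intro h
        refine QuotientGroup.eq.mpr ?_
        simpa using Hsub.inv_mem h
    rw [hseteq]
    exact hHopen.preimage (continuous_const.mul continuous_id)
  have hpos := hopenset.measure_pos μ ⟨x, rfl⟩
  rw [hnull] at hpos
  exact lt_irrefl _ hpos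
end

section
/- Let G be a connected locally compact Polish group and Γ < G a countable dense subgroup. Let Δ be a countable group, φ : G → Δ a measurable map, and δ₁, δ₂ : Γ → Δ group homomorphisms such that φ(gx) = δ₁(g)·φ(x)·δ₂(g)⁻¹ for all g ∈ Γ and almost every x ∈ G (with respect to Haar measure). Then φ is essentially constant: there exists h ∈ Δ such that φ(x) = h for almost every x ∈ G. -/
/- STATEMENT 13: Lemma 4.1 (second part): over a connected group, a measurable map
intertwining two homomorphisms along a dense subgroup is essentially constant. -/

open MeasureTheory Filter Set Topology ENNReal
open scoped Pointwise


/-- Ergodicity-style lemma: a measurable set a.e.-invariant under a dense set of left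
translations is null or conull. -/
lemma ergodic_aux
    {G : Type*} [Group G] [TopologicalSpace G] [IsTopologicalGroup G]
    [LocallyCompactSpace G] [SecondCountableTopology G] [T2Space G]
    [MeasurableSpace G] [BorelSpace G]
    (μ : Measure G) [μ.IsHaarMeasure] [μ.InnerRegular]
    {A : Set G} (hA : MeasurableSet A) (hApos : μ A ≠ 0)
    {S : Set G} (hS : Dense S)
    (hinv : ∀ g ∈ S, ∀ᵐ x ∂μ, ((g * x ∈ A) ↔ x ∈ A)) :
    μ Aᶜ = 0 := by
  by_contra h0
  obtain ⟨K, hKA, hKco, hKpos⟩ : ∃ K ⊆ A, IsCompact K ∧ 0 < μ K :=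
    hA.exists_lt_isCompact (pos_iff_ne_zero.2 hApos)
  obtain ⟨L, hLA, hLco, hLpos⟩ : ∃ L ⊆ Aᶜ, IsCompact L ∧ 0 < μ L :=
    hA.compl.exists_lt_isCompact (pos_iff_ne_zero.2 h0)
  -- step 1 : for g in S, translates of K don't meet L
  have claim1 : ∀ g ∈ S, μ ((g • K) ∩ L) = 0 := by
    intro g hg
    have hC : μ {x : G | ¬ ((g * x ∈ A) ↔ x ∈ A)} = 0 := by
      simpa [ae_iff] using hinv g hg
    have hgC : μ ((fun x => g⁻¹ * x) ⁻¹' {x : G | ¬ ((g * x ∈ A) ↔ x ∈ A)}) = 0 := by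
      rwa [measure_preimage_mul]
    refine measure_mono_null ?_ hgC
    rintro x ⟨hxK, hxL⟩
    rw [Set.mem_smul_set_iff_inv_smul_mem, smul_eq_mul] at hxK
    simp only [Set.mem_preimage, Set.mem_setOf_eq]
    intro h
    exact (hLA hxL) (by simpa using h.2 (hKA hxK))
  -- step 2 : for all g, translates of K don't meet L
  have claim2 : ∀ g : G, μ ((g • K) ∩ L) = 0 := by
    intro g
    rw [← nonpos_iff_eq_zero]
    refine ENNReal.le_of_forall_pos_le_add fun ε hε _ => ?_
    obtain ⟨V, hVsub, hVopen, hV1⟩ :=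
      eventually_nhds_iff.mp
        (eventually_nhds_one_measure_smul_diff_lt hKco hKco.isClosed
          (μ := μ) (ε := ε) (by exact_mod_cast hε.ne'))
    have hnbhd : (fun g' : G => g'⁻¹ * g) ⁻¹' V ∈ 𝓝 g := by
      apply (continuous_inv.mul continuous_const).continuousAt.preimage_mem_nhds
      simpa using hVopen.mem_nhds hV1
    obtain ⟨g', hg'mem, hg'S⟩ := mem_closure_iff_nhds.mp (hS g) _ hnbhd
    have hsub : (g • K) ∩ L ⊆ ((g' • K) ∩ L) ∪ ((g • K) \ (g' • K)) := by
      intro x ⟨hx1, hx2⟩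
      by_cases h : x ∈ g' • K
      · exact Or.inl ⟨h, hx2⟩
      · exact Or.inr ⟨hx1, h⟩
    calc μ ((g • K) ∩ L) ≤ μ (((g' • K) ∩ L) ∪ ((g • K) \ (g' • K))) := measure_mono hsub
      _ ≤ μ ((g' • K) ∩ L) + μ ((g • K) \ (g' • K)) := measure_union_le _ _
      _ = μ ((g • K) \ (g' • K)) := by rw [claim1 g' hg'S, zero_add]
      _ = μ (((g'⁻¹ * g) • K) \ K) := by
          rw [← measure_smul (μ := μ) g'⁻¹ ((g • K) \ (g' • K)), Set.smul_set_sdiff,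
            smul_smul, smul_smul, inv_mul_cancel, one_smul]
      _ ≤ (ε : ℝ≥0∞) := (hVsub _ hg'mem).le
      _ ≤ 0 + ε := by rw [zero_add]
  -- step 3 : Fubini contradiction
  set P : Set (G × G) := {p : G × G | p.1⁻¹ * p.2 ∈ K ∧ p.2 ∈ L} with hP
  have hPm : MeasurableSet P := by
    apply MeasurableSet.inter
    · exact (measurable_fst.inv.mul measurable_snd) hKco.isClosed.measurableSet
    · exact measurable_snd hLco.isClosed.measurableSet
  have h1 : μ.prod μ P = 0 := by
    rw [Measure.prod_apply hPm]
    have : ∀ g : G, μ (Prod.mk g ⁻¹' P) = 0 := by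
      intro g
      have : Prod.mk g ⁻¹' P = (g • K) ∩ L := by
        ext x
        simp [hP, Set.mem_smul_set_iff_inv_smul_mem]
      rw [this]; exact claim2 g
    simp [this]
  have h2 : μ.prod μ P = μ K⁻¹ * μ L := by
    rw [Measure.prod_apply_symm hPm]
    have : ∀ x : G, μ ((fun g => (g, x)) ⁻¹' P) = L.indicator (fun _ => μ K⁻¹) x := by
      intro x
      by_cases hx : x ∈ L
      · have : (fun g => (g, x)) ⁻¹' P = x • K⁻¹ := by
          ext g
          simp [hP, hx, Set.mem_smul_set_iff_inv_smul_mem, Set.mem_inv, mul_inv_rev]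
        rw [this, measure_smul, Set.indicator_of_mem hx]
      · have : (fun g => (g, x)) ⁻¹' P = ∅ := by
          ext g; simp [hP, hx]
        rw [this, Set.indicator_of_notMem hx]; simp
    rw [lintegral_congr this, lintegral_indicator_const hLco.isClosed.measurableSet]
  rw [h1] at h2
  rcases mul_eq_zero.mp h2.symm with h | h
  · exact hKpos.ne' ((measure_inv_null μ).mp h)
  · exact hLpos.ne' h


theorem intertwiner_essentially_constant
    {G : Type*} [Group G] [TopologicalSpace G] [IsTopologicalGroup G]
    [LocallyCompactSpace G] [PolishSpace G] [ConnectedSpace G]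
    [MeasurableSpace G] [BorelSpace G]
    -- m_G : a left invariant Haar measure on G
    (μ : Measure G) [μ.IsHaarMeasure]
    -- Γ : a countable dense subgroup of G
    (Γ : Subgroup G) [Countable Γ] (hΓdense : Dense (Γ : Set G))
    -- Δ : a countable group, φ : G → Δ measurable, δ₁, δ₂ : Γ → Δ homomorphisms
    {Δ : Type*} [Group Δ] [Countable Δ]
    (φ : G → Δ) (hφmeas : ∀ d : Δ, MeasurableSet {x | φ x = d})
    (δ₁ δ₂ : Γ →* Δ)
    -- φ(gx) = δ₁(g) φ(x) δ₂(g)⁻¹ for all g ∈ Γ and almost every x ∈ G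
    (hφ : ∀ g : Γ, ∀ᵐ x ∂μ, φ ((g : G) * x) = δ₁ g * φ x * (δ₂ g)⁻¹) :
    -- φ is essentially constant
    ∃ h : Δ, ∀ᵐ x ∂μ, φ x = h := by
  -- the Haar measure is regular, hence inner regular
  haveI hreg : μ.Regular := by
    have K₀ : TopologicalSpace.PositiveCompacts G := Classical.arbitrary _
    rw [Measure.isMulLeftInvariant_eq_smul μ (Measure.haarMeasure K₀)]
    exact Measure.Regular.smul ENNReal.coe_ne_top
  haveI : μ.InnerRegular := inferInstance
  -- there is a value attained on a set of positive measure
  obtain ⟨d₀, hd₀⟩ : ∃ d : Δ, μ {x | φ x = d} ≠ 0 := by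
    by_contra h
    push_neg at h
    have huniv : (⋃ d : Δ, {x : G | φ x = d}) = univ := by ext x; simp
    have h0 : μ (univ : Set G) = 0 := by
      rw [← huniv]; exact measure_iUnion_null fun d => h d
    exact (isOpen_univ.measure_pos μ univ_nonempty).ne' h0
  set A := {x : G | φ x = d₀} with hAdef
  have hAmeas : MeasurableSet A := hφmeas d₀
  -- the stabilizer of d₀
  set H : Subgroup G :=
    { carrier := {g : G | ∃ γ : Γ, (γ : G) = g ∧ δ₁ γ * d₀ * (δ₂ γ)⁻¹ = d₀}
      one_mem' := ⟨1, by simp, by simp⟩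
      mul_mem' := by
        rintro a b ⟨γ, rfl, hγ⟩ ⟨γ', rfl, hγ'⟩
        refine ⟨γ * γ', by simp, ?_⟩
        rw [map_mul, map_mul, mul_inv_rev]
        calc δ₁ γ * δ₁ γ' * d₀ * ((δ₂ γ')⁻¹ * (δ₂ γ)⁻¹)
            = δ₁ γ * (δ₁ γ' * d₀ * (δ₂ γ')⁻¹) * (δ₂ γ)⁻¹ := by group
          _ = d₀ := by rw [hγ']; exact hγ
      inv_mem' := by
        rintro a ⟨γ, rfl, hγ⟩
        refine ⟨γ⁻¹, by simp, ?_⟩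
        rw [map_inv, map_inv, inv_inv]
        calc (δ₁ γ)⁻¹ * d₀ * δ₂ γ
            = (δ₁ γ)⁻¹ * (δ₁ γ * d₀ * (δ₂ γ)⁻¹) * δ₂ γ := by rw [hγ]
          _ = d₀ := by group } with hHdef
  -- a compact subset of A of positive measure
  obtain ⟨K, hKA, hKco, hKpos⟩ : ∃ K ⊆ A, IsCompact K ∧ 0 < μ K :=
    hAmeas.exists_lt_isCompact (pos_iff_ne_zero.2 hd₀)
  -- Steinhaus-type neighborhood
  obtain ⟨U, hUsub, hUopen, hU1⟩ :=
    eventually_nhds_iff.mp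
      (eventually_nhds_one_measure_smul_diff_lt hKco hKco.isClosed (μ := μ) hKpos.ne')
  -- every element of Γ close to 1 stabilizes d₀
  have hΓU : ∀ γ : Γ, (γ : G) ∈ U → (γ : G) ∈ H := by
    intro γ hγU
    have hlt := hUsub _ hγU
    have hpos : μ (((γ : G) • K) ∩ K) ≠ 0 := by
      intro h
      have h1 : μ ((γ : G) • K) ≤ μ (((γ : G) • K) ∩ K) + μ (((γ : G) • K) \ K) :=
        measure_le_inter_add_diff μ _ _
      rw [h, zero_add, measure_smul] at h1
      exact absurd (lt_of_le_of_lt h1 hlt) (lt_irrefl _)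
    have hC : μ {x : G | ¬ φ ((γ : G) * x) = δ₁ γ * φ x * (δ₂ γ)⁻¹} = 0 := by
      simpa [ae_iff] using hφ γ
    have hgC : μ ((fun x => (γ : G)⁻¹ * x) ⁻¹'
        {x : G | ¬ φ ((γ : G) * x) = δ₁ γ * φ x * (δ₂ γ)⁻¹}) = 0 := by
      rwa [measure_preimage_mul]
    have hne : ((((γ : G) • K) ∩ K) \ ((fun x => (γ : G)⁻¹ * x) ⁻¹'
        {x : G | ¬ φ ((γ : G) * x) = δ₁ γ * φ x * (δ₂ γ)⁻¹})).Nonempty :=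
      nonempty_of_measure_ne_zero (by rwa [measure_diff_null hgC])
    obtain ⟨x, ⟨hx1, hx2⟩, hx3⟩ := hne
    rw [Set.mem_smul_set_iff_inv_smul_mem, smul_eq_mul] at hx1
    simp only [Set.mem_preimage, Set.mem_setOf_eq, not_not] at hx3
    have hy : φ ((γ : G)⁻¹ * x) = d₀ := hKA hx1
    have hxA : φ x = d₀ := hKA hx2
    have : φ ((γ : G) * ((γ : G)⁻¹ * x)) = δ₁ γ * d₀ * (δ₂ γ)⁻¹ := by rwa [hy] at hx3
    rw [mul_inv_cancel_left, hxA] at this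
    exact ⟨γ, rfl, this.symm⟩
  -- H is dense
  have hHdense : Dense (H : Set G) := by
    have hUsubH : U ⊆ closure (H : Set G) := by
      intro u hu
      refine closure_mono ?_ (hΓdense.open_subset_closure_inter hUopen hu)
      rintro v ⟨hvU, hvΓ⟩
      exact hΓU ⟨v, hvΓ⟩ hvU
    have hopen : IsOpen (H.topologicalClosure : Set G) := by
      refine Subgroup.isOpen_of_mem_nhds _ (Filter.mem_of_superset (hUopen.mem_nhds hU1) ?_)
      rw [Subgroup.topologicalClosure_coe]
      exact hUsubH
    have heq : (H.topologicalClosure : Set G) = univ :=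
      IsClopen.eq_univ ⟨H.topologicalClosure.isClosed_of_isOpen hopen, hopen⟩
        ⟨1, H.topologicalClosure.one_mem⟩
    rw [dense_iff_closure_eq, ← Subgroup.topologicalClosure_coe]
    exact heq
  -- A is a.e. invariant under H
  have hinv : ∀ g ∈ (H : Set G), ∀ᵐ x ∂μ, ((g * x ∈ A) ↔ x ∈ A) := by
    rintro g ⟨γ, rfl, hγ⟩
    filter_upwards [hφ γ] with x hx
    simp only [hAdef, Set.mem_setOf_eq]
    constructor
    · intro hgx
      have h2 : δ₁ γ * φ x * (δ₂ γ)⁻¹ = δ₁ γ * d₀ * (δ₂ γ)⁻¹ := by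
        rw [← hx, hgx, hγ]
      exact mul_left_cancel (mul_right_cancel h2)
    · intro hxA
      rw [hx, hxA, hγ]
  -- conclude by ergodicity
  have h0 : μ Aᶜ = 0 := ergodic_aux μ hAmeas hd₀ hHdense hinv
  refine ⟨d₀, ?_⟩
  rw [ae_iff]
  simpa [hAdef, Set.compl_setOf] using h0
end
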